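/- arXiv:2205.09478 — 6 statements merged into one kernel-verified Lean document; each statement's English description precedes it below -/
import Mathlib

section
/- Let (x_n) be a truncation quasi-greedy basis of a Banach space X with constant C ≥ 1, let (D_j)_{j≥1} be pairwise disjoint nonempty finite subsets of ℕ, let ε ∈ 𝔼^ℕ (unimodular scalars), and set y_j = Σ_{n∈D_j} ε_n x_n. Then for every finitely supported scalar sequence (a_j) and every k, one has |a_k|·‖y_k‖ ≤ 2C·‖Σ_j a_j y_j‖. In particular, the constant-coefficient block basic sequence (y_j) is an M-bounded basis of its closed linear span. -/
/-- Let `(x_n)` be a truncation quasi-greedy basis of a Banach space `X`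
with constant `C ≥ 1`, `(D_j)` pairwise disjoint nonempty finite subsets of `ℕ`,
`ε` unimodular signs, and `y_j = Σ_{n ∈ D_j} ε_n x_n`. Then for every finitely supported
scalar sequence `(a_j)` (supported on a finite set `J`) and every `k ∈ J`,
`|a_k|·‖y_k‖ ≤ 2C·‖Σ_j a_j y_j‖`; in particular `(y_j)` is an `M`-bounded basic sequence. -/
theorem stmt_8 {X : Type*} [NormedAddCommGroup X] [NormedSpace ℝ X] [CompleteSpace X]
    (x : ℕ → X) (xs : ℕ → X →L[ℝ] ℝ)
    (hbi : ∀ n k, xs n (x k) = if n = k then 1 else 0)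
    (C : ℝ) (hC1 : 1 ≤ C)
    (hTQG : ∀ (f : X) (A : Finset ℕ), A.Nonempty →
      (∀ n ∈ A, ∀ k ∉ A, |xs k f| ≤ |xs n f|) →
      (∀ r : ℝ, (∀ n ∈ A, r ≤ |xs n f|) →
        r * ‖∑ n ∈ A, (if xs n f = 0 then 1 else xs n f / |xs n f|) • x n‖ ≤ C * ‖f‖))
    (D : ℕ → Finset ℕ) (hDne : ∀ j, (D j).Nonempty)
    (hDdisj : ∀ i j, i ≠ j → Disjoint (D i) (D j))
    (ε : ℕ → ℝ) (hε : ∀ n, |ε n| = 1)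
    (y : ℕ → X) (hy : ∀ j, y j = ∑ n ∈ D j, ε n • x n) :
    ∀ (a : ℕ → ℝ) (J : Finset ℕ), ∀ k ∈ J,
      |a k| * ‖y k‖ ≤ 2 * C * ‖∑ j ∈ J, a j • y j‖ := by
  intro a J k hk
  by_cases hak : a k = 0
  · rw [hak, abs_zero, zero_mul]
    positivity
  set f := ∑ j ∈ J, a j • y j with hf
  have hεne : ∀ n, ε n ≠ 0 := by
    intro n h
    have := hε n
    rw [h, abs_zero] at this
    norm_num at this
  have hcoeffy : ∀ n i, xs n (y i) = if n ∈ D i then ε n else 0 := by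
    intro n i
    rw [hy, map_sum]
    simp only [map_smul, hbi, smul_eq_mul, mul_ite, mul_one, mul_zero]
    exact Finset.sum_ite_eq (D i) n ε
  have hcoeff : ∀ j ∈ J, ∀ n ∈ D j, xs n f = a j * ε n := by
    intro j hj n hn
    rw [hf, map_sum]
    simp only [map_smul, smul_eq_mul, hcoeffy]
    rw [Finset.sum_eq_single j]
    · rw [if_pos hn]
    · intro i hi hij
      have hni : n ∉ D i := fun h => Finset.disjoint_left.mp (hDdisj i j hij) h hn
      rw [if_neg hni, mul_zero]
    · intro h; exact absurd hj h
  have h0 : ∀ n, (∀ j ∈ J, n ∉ D j) → xs n f = 0 := by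
    intro n hn
    rw [hf, map_sum]
    apply Finset.sum_eq_zero
    intro j hj
    simp only [map_smul, smul_eq_mul, hcoeffy, if_neg (hn j hj), mul_zero]
  have habs : ∀ j ∈ J, ∀ n ∈ D j, |xs n f| = |a j| := by
    intro j hj n hn
    rw [hcoeff j hj n hn, abs_mul, hε, mul_one]
  set A := (J.filter fun j => |a k| ≤ |a j|).biUnion D with hA
  have hkA : D k ⊆ A := by
    intro n hn
    exact Finset.mem_biUnion.mpr ⟨k, Finset.mem_filter.mpr ⟨hk, le_refl _⟩, hn⟩
  have hAlow : ∀ n ∈ A, |a k| ≤ |xs n f| := by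
    intro n hn
    obtain ⟨j, hjf, hnD⟩ := Finset.mem_biUnion.mp hn
    obtain ⟨hjJ, hle⟩ := Finset.mem_filter.mp hjf
    rw [habs j hjJ n hnD]
    exact hle
  have hAgreedy : ∀ n ∈ A, ∀ m ∉ A, |xs m f| ≤ |xs n f| := by
    intro n hn m hm
    have h1 := hAlow n hn
    by_cases hm' : ∃ j ∈ J, m ∈ D j
    · obtain ⟨j, hjJ, hmD⟩ := hm'
      have hlt : ¬ |a k| ≤ |a j| := fun h =>
        hm (Finset.mem_biUnion.mpr ⟨j, Finset.mem_filter.mpr ⟨hjJ, h⟩, hmD⟩)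
      rw [habs j hjJ m hmD]
      linarith [not_le.mp hlt]
    · push_neg at hm'
      rw [h0 m hm', abs_zero]
      exact le_trans (abs_nonneg _) h1
  have hσ : ∀ j ∈ J, a j ≠ 0 → ∀ n ∈ D j,
      (if xs n f = 0 then 1 else xs n f / |xs n f|) = (a j / |a j|) * ε n := by
    intro j hj haj n hn
    have hne : xs n f ≠ 0 := by
      rw [hcoeff j hj n hn]
      exact mul_ne_zero haj (hεne n)
    rw [if_neg hne, hcoeff j hj n hn, abs_mul, hε, mul_one]
    ring
  have hsumDk : ∑ n ∈ D k, (if xs n f = 0 then 1 else xs n f / |xs n f|) • x n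
      = (a k / |a k|) • y k := by
    rw [hy, Finset.smul_sum]
    apply Finset.sum_congr rfl
    intro n hn
    rw [hσ k hk hak n hn, mul_smul]
  have hsplit : ∑ n ∈ A \ D k, (if xs n f = 0 then 1 else xs n f / |xs n f|) • x n
      + ∑ n ∈ D k, (if xs n f = 0 then 1 else xs n f / |xs n f|) • x n
      = ∑ n ∈ A, (if xs n f = 0 then 1 else xs n f / |xs n f|) • x n :=
    Finset.sum_sdiff hkA
  have hAne : A.Nonempty := (hDne k).mono hkA
  have hAbound := hTQG f A hAne hAgreedy (|a k|) hAlow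
  have hnormDk : ‖∑ n ∈ D k, (if xs n f = 0 then 1 else xs n f / |xs n f|) • x n‖
      = ‖y k‖ := by
    rw [hsumDk, norm_smul]
    have : ‖a k / |a k|‖ = 1 := by
      rw [Real.norm_eq_abs, abs_div, abs_abs, div_self (abs_ne_zero.mpr hak)]
    rw [this, one_mul]
  have hfnn : 0 ≤ ‖f‖ := norm_nonneg f
  have hCnn : 0 ≤ C * ‖f‖ := mul_nonneg (by linarith) hfnn
  rcases Finset.eq_empty_or_nonempty (A \ D k) with hBe | hBne
  · -- B empty : A = D k
    rw [hBe, Finset.sum_empty, zero_add] at hsplit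
    rw [← hnormDk, hsplit]
    calc |a k| * ‖∑ n ∈ A, (if xs n f = 0 then 1 else xs n f / |xs n f|) • x n‖
        ≤ C * ‖f‖ := hAbound
      _ ≤ 2 * C * ‖f‖ := by linarith
  · have hBsub : A \ D k ⊆ A := Finset.sdiff_subset
    have hBlow : ∀ n ∈ A \ D k, |a k| ≤ |xs n f| := fun n hn => hAlow n (hBsub hn)
    have hBgreedy : ∀ n ∈ A \ D k, ∀ m ∉ A \ D k, |xs m f| ≤ |xs n f| := by
      intro n hn m hm
      by_cases hmA : m ∈ A
      · have hmDk : m ∈ D k := by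
          by_contra h
          exact hm (Finset.mem_sdiff.mpr ⟨hmA, h⟩)
        rw [habs k hk m hmDk]
        exact hBlow n hn
      · exact hAgreedy n (hBsub hn) m hmA
    have hBbound := hTQG f (A \ D k) hBne hBgreedy (|a k|) hBlow
    have htri : ‖∑ n ∈ D k, (if xs n f = 0 then 1 else xs n f / |xs n f|) • x n‖
        ≤ ‖∑ n ∈ A, (if xs n f = 0 then 1 else xs n f / |xs n f|) • x n‖
        + ‖∑ n ∈ A \ D k, (if xs n f = 0 then 1 else xs n f / |xs n f|) • x n‖ := by
      have : ∑ n ∈ D k, (if xs n f = 0 then 1 else xs n f / |xs n f|) • x n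
          = ∑ n ∈ A, (if xs n f = 0 then 1 else xs n f / |xs n f|) • x n
          - ∑ n ∈ A \ D k, (if xs n f = 0 then 1 else xs n f / |xs n f|) • x n := by
        rw [← hsplit]; abel
      rw [this]
      exact norm_sub_le _ _
    have hmain : |a k| * ‖y k‖ ≤ C * ‖f‖ + C * ‖f‖ := by
      rw [← hnormDk]
      calc |a k| * ‖∑ n ∈ D k, (if xs n f = 0 then 1 else xs n f / |xs n f|) • x n‖
          ≤ |a k| * (‖∑ n ∈ A, (if xs n f = 0 then 1 else xs n f / |xs n f|) • x n‖
            + ‖∑ n ∈ A \ D k, (if xs n f = 0 then 1 else xs n f / |xs n f|) • x n‖) :=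
            mul_le_mul_of_nonneg_left htri (abs_nonneg _)
        _ = |a k| * ‖∑ n ∈ A, (if xs n f = 0 then 1 else xs n f / |xs n f|) • x n‖
            + |a k| * ‖∑ n ∈ A \ D k, (if xs n f = 0 then 1 else xs n f / |xs n f|) • x n‖ := by
            ring
        _ ≤ C * ‖f‖ + C * ‖f‖ := add_le_add hAbound hBbound
    linarith
end

section
/- Let X be a p-Banach space (0 < p ≤ 1) and (x_n) a semi-normalized M-bounded nearly unconditional basis of X with near unconditionality function φ. Let α₁ = sup_n ‖x_n‖, α₂ = sup_n ‖x*_n‖. Then for every m ∈ ℕ the unconditionality parameter satisfies k_m^p ≤ 2 α₁^p α₂^p · φ(m^{-1/p})^p. -/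
/-- Let `X` be a `p`-Banach space (`0 < p ≤ 1`, quasi-norm `N` with
`N(f+g)^p ≤ N(f)^p + N(g)^p`) and `(x_n)` a semi-normalized `M`-bounded nearly unconditional
basis with near unconditionality function `φ`, `α₁ = sup ‖x_n‖`, `α₂ = sup ‖x*_n‖`. Then the
unconditionality parameters satisfy `k_m^p ≤ 2·α₁^p·α₂^p·φ(m^{-1/p})^p`; i.e. for every set
`A` with `|A| ≤ m` and every `f`, `N(S_A f)^p ≤ 2·α₁^p·α₂^p·φ(m^{-1/p})^p·N(f)^p`. -/
theorem stmt_10 {X : Type*} [AddCommGroup X] [Module ℝ X]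
    (N : X → ℝ) (p : ℝ) (hp0 : 0 < p) (hp1 : p ≤ 1)
    (hN0 : ∀ f, 0 ≤ N f) (hNdef : ∀ f, N f = 0 → f = 0)
    (hNsmul : ∀ (t : ℝ) (f : X), N (t • f) = |t| * N f)
    (hNp : ∀ f g : X, N (f + g) ^ p ≤ N f ^ p + N g ^ p)
    (x : ℕ → X) (xs : ℕ → X →ₗ[ℝ] ℝ)
    (hbi : ∀ n k, xs n (x k) = if n = k then 1 else 0)
    (α₁ α₂ : ℝ) (hα₁ : ∀ n, N (x n) ≤ α₁) (hα₂ : ∀ n f, |xs n f| ≤ α₂ * N f)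
    (φ : ℝ → ℝ) (hφ1 : ∀ a, 0 < a → a ≤ 1 → 1 ≤ φ a)
    (hφ : ∀ a, 0 < a → a ≤ 1 → ∀ f : X, (∀ n, |xs n f| ≤ 1) →
      ∀ A : Finset ℕ, (∀ n ∈ A, a ≤ |xs n f|) →
        N (∑ n ∈ A, xs n f • x n) ≤ φ a * N f) :
    ∀ m : ℕ, 1 ≤ m → ∀ A : Finset ℕ, A.card ≤ m → ∀ f : X,
      N (∑ n ∈ A, xs n f • x n) ^ p ≤
        2 * α₁ ^ p * α₂ ^ p * φ ((m : ℝ) ^ (-1 / p)) ^ p * N f ^ p := by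
  intro m hm A hA f
  have hN00 : N 0 = 0 := by
    have := hNsmul 0 0; simpa using this
  -- the p-triangle inequality for finite sums
  have htri : ∀ (s : Finset ℕ) (v : ℕ → X),
      N (∑ n ∈ s, v n) ^ p ≤ ∑ n ∈ s, N (v n) ^ p := by
    intro s v
    induction s using Finset.cons_induction with
    | empty => simp [hN00, Real.zero_rpow hp0.ne']
    | cons n s hns ih =>
      rw [Finset.sum_cons, Finset.sum_cons]
      calc N (v n + ∑ k ∈ s, v k) ^ p
          ≤ N (v n) ^ p + N (∑ k ∈ s, v k) ^ p := hNp _ _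
        _ ≤ _ := by linarith
  -- basic positivity facts
  have h1 : (1 : ℝ) ≤ α₂ * N (x 0) := by
    have := hα₂ 0 (x 0)
    rw [hbi 0 0] at this; simpa using this
  have hx0 : 0 < N (x 0) := by
    rcases lt_or_eq_of_le (hN0 (x 0)) with h | h
    · exact h
    · rw [← h, mul_zero] at h1; linarith
  have hα₂pos : 0 < α₂ := by nlinarith [hN0 (x 0)]
  have hα₁pos : 0 < α₁ := lt_of_lt_of_le hx0 (hα₁ 0)
  have h1' : (1 : ℝ) ≤ α₂ * α₁ := le_trans h1 (by nlinarith [hα₁ 0, hα₂pos])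
  set a : ℝ := (m : ℝ) ^ (-1 / p) with ha_def
  have hm0 : (0 : ℝ) < m := by exact_mod_cast hm
  have hm1 : (1 : ℝ) ≤ m := by exact_mod_cast hm
  have ha0 : 0 < a := Real.rpow_pos_of_pos hm0 _
  have ha1 : a ≤ 1 :=
    Real.rpow_le_one_of_one_le_of_nonpos hm1
      (by apply div_nonpos_of_nonpos_of_nonneg <;> linarith)
  have hap : a ^ p = (m : ℝ)⁻¹ := by
    rw [ha_def, ← Real.rpow_mul hm0.le]
    rw [div_mul_cancel₀ (-1 : ℝ) hp0.ne', Real.rpow_neg_one]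
  have hφa : 1 ≤ φ a := hφ1 a ha0 ha1
  have hφap : 1 ≤ φ a ^ p := Real.one_le_rpow hφa hp0.le
  -- deal with the trivial case f = 0
  by_cases hf : f = 0
  · subst hf
    have : ∀ n ∈ A, xs n (0 : X) • x n = 0 := by intro n _; simp
    rw [Finset.sum_eq_zero this, hN00, Real.zero_rpow hp0.ne']
    simp
  have hNf : 0 < N f := by
    rcases lt_or_eq_of_le (hN0 f) with h | h
    · exact h
    · exact absurd (hNdef f h.symm) hf
  set c : ℝ := α₂ * N f with hc_def
  have hc0 : 0 < c := mul_pos hα₂pos hNf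
  set g : X := c⁻¹ • f with hg_def
  have hxg : ∀ n, xs n g = c⁻¹ * xs n f := by
    intro n; rw [hg_def, map_smul]; simp
  have hgQ : ∀ n, |xs n g| ≤ 1 := by
    intro n
    rw [hxg n, abs_mul, abs_inv, abs_of_pos hc0]
    rw [inv_mul_le_iff₀ hc0, mul_one]
    exact hα₂ n f
  have hNg : N g = α₂⁻¹ := by
    rw [hg_def, hNsmul, abs_inv, abs_of_pos hc0, hc_def]
    field_simp
  -- split A
  set A₁ : Finset ℕ := A.filter (fun n => a ≤ |xs n g|) with hA₁
  set A₂ : Finset ℕ := A.filter (fun n => ¬ a ≤ |xs n g|) with hA₂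
  -- bound for A₁
  have hT₁ : N (∑ n ∈ A₁, xs n g • x n) ≤ φ a * α₂⁻¹ := by
    have := hφ a ha0 ha1 g hgQ A₁ (fun n hn => (Finset.mem_filter.mp hn).2)
    rwa [hNg] at this
  have hT₁p : N (∑ n ∈ A₁, xs n g • x n) ^ p ≤ φ a ^ p * α₁ ^ p := by
    have h2 : N (∑ n ∈ A₁, xs n g • x n) ^ p ≤ (φ a * α₂⁻¹) ^ p :=
      Real.rpow_le_rpow (hN0 _) hT₁ hp0.le
    have h3 : (φ a * α₂⁻¹) ^ p = φ a ^ p * (α₂⁻¹) ^ p :=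
      Real.mul_rpow (by linarith) (by positivity)
    have h4 : (α₂⁻¹ : ℝ) ^ p ≤ α₁ ^ p := by
      apply Real.rpow_le_rpow (by positivity) _ hp0.le
      rw [inv_le_iff_one_le_mul₀ hα₂pos]
      linarith [h1']
    calc N (∑ n ∈ A₁, xs n g • x n) ^ p ≤ (φ a * α₂⁻¹) ^ p := h2
      _ = φ a ^ p * (α₂⁻¹) ^ p := h3
      _ ≤ φ a ^ p * α₁ ^ p := by nlinarith [Real.rpow_nonneg (le_of_lt (lt_of_lt_of_le one_pos hφa)) p]
  -- bound for A₂
  have hT₂p : N (∑ n ∈ A₂, xs n g • x n) ^ p ≤ α₁ ^ p := by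
    have hterm : ∀ n ∈ A₂, N (xs n g • x n) ^ p ≤ a ^ p * α₁ ^ p := by
      intro n hn
      have hlt : |xs n g| ≤ a := le_of_lt (lt_of_not_ge (Finset.mem_filter.mp hn).2)
      have : N (xs n g • x n) ≤ a * α₁ := by
        rw [hNsmul]
        exact mul_le_mul hlt (hα₁ n) (hN0 _) ha0.le
      calc N (xs n g • x n) ^ p ≤ (a * α₁) ^ p :=
            Real.rpow_le_rpow (hN0 _) this hp0.le
        _ = a ^ p * α₁ ^ p := Real.mul_rpow ha0.le hα₁pos.le
    have hcard : (A₂.card : ℝ) ≤ m := by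
      exact_mod_cast le_trans (Finset.card_le_card (Finset.filter_subset _ _)) hA
    calc N (∑ n ∈ A₂, xs n g • x n) ^ p ≤ ∑ n ∈ A₂, N (xs n g • x n) ^ p := htri _ _
      _ ≤ ∑ _n ∈ A₂, a ^ p * α₁ ^ p := Finset.sum_le_sum hterm
      _ = A₂.card * (a ^ p * α₁ ^ p) := by rw [Finset.sum_const, nsmul_eq_mul]
      _ ≤ m * ((m : ℝ)⁻¹ * α₁ ^ p) := by
          rw [hap]
          have hα₁p : (0:ℝ) ≤ α₁ ^ p := Real.rpow_nonneg hα₁pos.le p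
          have hmi : (0:ℝ) ≤ (m:ℝ)⁻¹ := by positivity
          exact mul_le_mul hcard le_rfl (by positivity) hm0.le
      _ = α₁ ^ p := by field_simp
  -- combine
  have hsplit : (∑ n ∈ A, xs n g • x n)
      = (∑ n ∈ A₁, xs n g • x n) + (∑ n ∈ A₂, xs n g • x n) :=
    (Finset.sum_filter_add_sum_filter_not A _ _).symm
  have hTg : N (∑ n ∈ A, xs n g • x n) ^ p ≤ 2 * (φ a ^ p * α₁ ^ p) := by
    rw [hsplit]
    have := hNp (∑ n ∈ A₁, xs n g • x n) (∑ n ∈ A₂, xs n g • x n)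
    have hφa1 : α₁ ^ p ≤ φ a ^ p * α₁ ^ p := by
      nlinarith [Real.rpow_nonneg hα₁pos.le p]
    linarith
  -- scale back
  have hS : (∑ n ∈ A, xs n f • x n) = c • (∑ n ∈ A, xs n g • x n) := by
    rw [Finset.smul_sum]
    apply Finset.sum_congr rfl
    intro n _
    rw [hxg n, smul_smul, ← mul_assoc, mul_inv_cancel₀ hc0.ne', one_mul]
  have hcp : c ^ p = α₂ ^ p * N f ^ p := by
    rw [hc_def]; exact Real.mul_rpow hα₂pos.le (hN0 f)
  calc N (∑ n ∈ A, xs n f • x n) ^ p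
      = (c * N (∑ n ∈ A, xs n g • x n)) ^ p := by
        rw [hS, hNsmul, abs_of_pos hc0]
    _ = c ^ p * N (∑ n ∈ A, xs n g • x n) ^ p :=
        Real.mul_rpow hc0.le (hN0 _)
    _ ≤ c ^ p * (2 * (φ a ^ p * α₁ ^ p)) := by
        have : (0:ℝ) ≤ c ^ p := Real.rpow_nonneg hc0.le p
        nlinarith
    _ = 2 * α₁ ^ p * α₂ ^ p * φ a ^ p * N f ^ p := by
        rw [hcp]; ring
end

section
/- Let X be a p-Banach space (0 < p ≤ 1) and (x_n) a semi-normalized M-bounded nearly unconditional basis with near unconditionality function φ and unconditionality parameters (k_m). Suppose F : (0,∞) → [1,∞) is non-decreasing and k_m ≥ F(m) for all m ∈ ℕ. Then φ(a) ≥ (4^{-1/p}/(α₁α₂))·F(a^{-p}) for all 0 < a ≤ 1, where α₁ = sup_n ‖x_n‖ and α₂ = sup_n ‖x*_n‖. -/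
lemma pnorm_sum_aux {X : Type*} [AddCommGroup X] (N : X → ℝ) (p : ℝ) (hp0 : 0 < p)
    (hzero : N 0 = 0)
    (hNp : ∀ f g : X, N (f + g) ^ p ≤ N f ^ p + N g ^ p)
    (s : Finset ℕ) (g : ℕ → X) :
    N (∑ n ∈ s, g n) ^ p ≤ ∑ n ∈ s, N (g n) ^ p := by
  induction s using Finset.cons_induction with
  | empty => simp [hzero, Real.zero_rpow hp0.ne']
  | cons n s hn ih =>
    rw [Finset.sum_cons, Finset.sum_cons]
    exact (hNp _ _).trans (by linarith)

/-- Let `X` be a `p`-Banach space (`0 < p ≤ 1`) and `(x_n)` a semi-normalized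
`M`-bounded nearly unconditional basis with unconditionality parameters `k_m ≥ F(m)` for a
non-decreasing `F : (0,∞) → [1,∞)`. Then the near unconditionality function satisfies
`φ(a) ≥ 4^{-1/p}·(α₁α₂)^{-1}·F(a^{-p})` for `0 < a ≤ 1`: any constant `C` valid in the
near unconditionality estimate at level `a` dominates `F(a^{-p})/(4^{1/p}·α₁·α₂)`. -/
theorem stmt_11 {X : Type*} [AddCommGroup X] [Module ℝ X]
    (N : X → ℝ) (p : ℝ) (hp0 : 0 < p) (hp1 : p ≤ 1)
    (hN0 : ∀ f, 0 ≤ N f) (hNdef : ∀ f, N f = 0 → f = 0)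
    (hNsmul : ∀ (t : ℝ) (f : X), N (t • f) = |t| * N f)
    (hNp : ∀ f g : X, N (f + g) ^ p ≤ N f ^ p + N g ^ p)
    (x : ℕ → X) (xs : ℕ → X →ₗ[ℝ] ℝ)
    (hbi : ∀ n k, xs n (x k) = if n = k then 1 else 0)
    (α₁ α₂ : ℝ) (hα₁ : ∀ n, N (x n) ≤ α₁) (hα₂ : ∀ n f, |xs n f| ≤ α₂ * N f)
    (F : ℝ → ℝ) (hF1 : ∀ t, 0 < t → 1 ≤ F t)
    (hFmono : ∀ t u : ℝ, 0 < t → t ≤ u → F t ≤ F u)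
    (hkF : ∀ m : ℕ, 1 ≤ m → ∀ ε : ℝ, 0 < ε → ∃ (A : Finset ℕ) (f : X),
      A.card ≤ m ∧ N f ≤ 1 ∧ F m - ε ≤ N (∑ n ∈ A, xs n f • x n)) :
    ∀ a : ℝ, 0 < a → a ≤ 1 → ∀ C : ℝ,
      (∀ f : X, (∀ n, |xs n f| ≤ 1) → ∀ A : Finset ℕ, (∀ n ∈ A, a ≤ |xs n f|) →
        N (∑ n ∈ A, xs n f • x n) ≤ C * N f) →
      (1 / ((4 : ℝ) ^ (1 / p) * α₁ * α₂)) * F (a ^ (-p)) ≤ C := by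
  intro a ha0 ha1 C hC
  -- N 0 = 0
  have hzero : N 0 = 0 := by
    have := hNsmul 0 0; simpa using this
  -- N (x 0) > 0
  have hx0 : 0 < N (x 0) := by
    rcases lt_or_eq_of_le (hN0 (x 0)) with h | h
    · exact h
    · exfalso
      have h0 : x 0 = 0 := hNdef _ h.symm
      have := hbi 0 0
      rw [h0] at this
      simp at this
  -- 1 ≤ C
  have hC1 : 1 ≤ C := by
    have hcoef : ∀ n, |xs n (x 0)| ≤ 1 := by
      intro n; rw [hbi]; split <;> simp
    have hA : ∀ n ∈ ({0} : Finset ℕ), a ≤ |xs n (x 0)| := by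
      intro n hn; simp at hn; subst hn; rw [hbi]; simpa using ha1
    have := hC (x 0) hcoef {0} hA
    simp only [Finset.sum_singleton, hbi] at this
    simp at this
    nlinarith [hx0]
  -- α₂ > 0, α₁ > 0, 1 ≤ α₁*α₂
  have hαα : 1 ≤ α₂ * N (x 0) := by
    have := hα₂ 0 (x 0); rw [hbi] at this; simpa using this
  have hα₂0 : 0 < α₂ := by nlinarith [hN0 (x 0)]
  have hα₁0 : 0 < α₁ := lt_of_lt_of_le hx0 (hα₁ 0)
  have h1αα : 1 ≤ α₁ * α₂ := by nlinarith [hα₁ 0]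
  -- setup m
  have hap : (1 : ℝ) ≤ a ^ (-p) :=
    Real.one_le_rpow_of_pos_of_le_one_of_nonpos ha0 ha1 (by linarith)
  have hap0 : (0 : ℝ) < a ^ (-p) := lt_of_lt_of_le one_pos hap
  set m : ℕ := ⌈a ^ (-p)⌉₊ with hm
  have hm1 : 1 ≤ m := Nat.one_le_ceil_iff.mpr hap0
  have hmle : (m : ℝ) ≤ 2 * a ^ (-p) := by
    have := Nat.ceil_lt_add_one hap0.le (R := ℝ)
    simp only [← hm] at this
    linarith
  have hmge : a ^ (-p) ≤ (m : ℝ) := Nat.le_ceil _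
  have hD0 : (0:ℝ) < (4 : ℝ) ^ (1 / p) := Real.rpow_pos_of_pos (by norm_num) _
  -- key: F m ≤ 4^{1/p} * C * α₁ * α₂
  have key : F m ≤ (4 : ℝ) ^ (1 / p) * C * α₁ * α₂ := by
    apply le_of_forall_pos_le_add
    intro ε hε
    obtain ⟨A, f, hcard, hNf, hFA⟩ := hkF m hm1 ε hε
    set P : ℕ → Prop := fun n => a * α₂ ≤ |xs n f| with hP
    have hPdec : DecidablePred P := fun n => Real.decidableLE _ _
    set A1 := A.filter P with hA1
    set A2 := A.filter (fun n => ¬ P n) with hA2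
    -- bound the big-coefficient part
    have hS1 : N (∑ n ∈ A1, xs n f • x n) ≤ C := by
      set g := α₂⁻¹ • f with hg
      have hcoefg : ∀ n, |xs n g| ≤ 1 := by
        intro n
        rw [hg, map_smul, smul_eq_mul, abs_mul, abs_of_nonneg (inv_nonneg.mpr hα₂0.le)]
        calc α₂⁻¹ * |xs n f| ≤ α₂⁻¹ * (α₂ * N f) := by
              apply mul_le_mul_of_nonneg_left (hα₂ n f) (inv_nonneg.mpr hα₂0.le)
          _ = N f := by field_simp
          _ ≤ 1 := hNf
      have hAg : ∀ n ∈ A1, a ≤ |xs n g| := by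
        intro n hn
        have hPn : P n := (Finset.mem_filter.mp hn).2
        rw [hg, map_smul, smul_eq_mul, abs_mul, abs_of_nonneg (inv_nonneg.mpr hα₂0.le)]
        calc a = (a * α₂) * α₂⁻¹ := by field_simp
          _ ≤ |xs n f| * α₂⁻¹ := by
              apply mul_le_mul_of_nonneg_right _ (inv_nonneg.mpr hα₂0.le)
              exact (Finset.mem_filter.mp hn).2
          _ = α₂⁻¹ * |xs n f| := mul_comm _ _
      have := hC g hcoefg A1 hAg
      have hsum : ∑ n ∈ A1, xs n g • x n = α₂⁻¹ • ∑ n ∈ A1, xs n f • x n := by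
        rw [Finset.smul_sum]
        apply Finset.sum_congr rfl
        intro n _
        rw [hg, map_smul, smul_eq_mul, mul_smul]
      rw [hsum, hNsmul, hg, hNsmul] at this
      rw [abs_of_nonneg (inv_nonneg.mpr hα₂0.le)] at this
      have h2 : N (∑ n ∈ A1, xs n f • x n) ≤ C * N f := by
        have := mul_le_mul_of_nonneg_left this hα₂0.le
        rw [← mul_assoc, mul_inv_cancel₀ hα₂0.ne', one_mul] at this
        calc N (∑ n ∈ A1, xs n f • x n) ≤ α₂ * (C * (α₂⁻¹ * N f)) := this
          _ = C * N f := by field_simp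
      exact h2.trans (by nlinarith [hN0 f])
    -- bound the small-coefficient part
    have hS2 : N (∑ n ∈ A2, xs n f • x n) ^ p ≤ 2 * (α₁ * α₂) ^ p := by
      have hterm : ∀ n ∈ A2, N (xs n f • x n) ^ p ≤ (a * (α₁ * α₂)) ^ p := by
        intro n hn
        have hPn0 : ¬ P n := (Finset.mem_filter.mp hn).2
        have hPn : |xs n f| < a * α₂ := not_le.mp hPn0
        rw [hNsmul]
        apply Real.rpow_le_rpow (mul_nonneg (abs_nonneg _) (hN0 _)) _ hp0.le
        calc |xs n f| * N (x n) ≤ (a * α₂) * α₁ := by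
              apply mul_le_mul hPn.le (hα₁ n) (hN0 _) (by positivity)
          _ = a * (α₁ * α₂) := by ring
      calc N (∑ n ∈ A2, xs n f • x n) ^ p
          ≤ ∑ n ∈ A2, N (xs n f • x n) ^ p :=
            pnorm_sum_aux N p hp0 hzero hNp A2 _
        _ ≤ ∑ _n ∈ A2, (a * (α₁ * α₂)) ^ p := Finset.sum_le_sum hterm
        _ = A2.card * (a * (α₁ * α₂)) ^ p := by rw [Finset.sum_const, nsmul_eq_mul]
        _ ≤ m * (a * (α₁ * α₂)) ^ p := by
            apply mul_le_mul_of_nonneg_right _ (Real.rpow_nonneg (by positivity) _)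
            exact_mod_cast (Finset.card_filter_le A _).trans hcard
        _ = ((m : ℝ) * a ^ p) * (α₁ * α₂) ^ p := by
            rw [Real.mul_rpow ha0.le (by positivity)]; ring
        _ ≤ 2 * (α₁ * α₂) ^ p := by
            apply mul_le_mul_of_nonneg_right _ (Real.rpow_nonneg (by positivity) _)
            have hap' : (0:ℝ) < a ^ p := Real.rpow_pos_of_pos ha0 _
            have : a ^ (-p) * a ^ p = 1 := by
              rw [← Real.rpow_add ha0]; simp
            calc (m : ℝ) * a ^ p ≤ (2 * a ^ (-p)) * a ^ p :=
                  mul_le_mul_of_nonneg_right hmle hap'.le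
              _ = 2 * (a ^ (-p) * a ^ p) := by ring
              _ = 2 := by rw [this]; ring
    -- combine via p-triangle inequality
    have hsplit : (∑ n ∈ A, xs n f • x n)
        = (∑ n ∈ A1, xs n f • x n) + (∑ n ∈ A2, xs n f • x n) := by
      rw [hA1, hA2, Finset.sum_filter_add_sum_filter_not]
    have hCp1 : (1:ℝ) ≤ C ^ p := Real.one_le_rpow hC1 hp0.le
    have hααp1 : (1:ℝ) ≤ (α₁ * α₂) ^ p := Real.one_le_rpow h1αα hp0.le
    have hS1p : N (∑ n ∈ A1, xs n f • x n) ^ p ≤ C ^ p :=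
      Real.rpow_le_rpow (hN0 _) hS1 hp0.le
    have hNAp : N (∑ n ∈ A, xs n f • x n) ^ p ≤ 4 * (C * (α₁ * α₂)) ^ p := by
      calc N (∑ n ∈ A, xs n f • x n) ^ p
          ≤ N (∑ n ∈ A1, xs n f • x n) ^ p + N (∑ n ∈ A2, xs n f • x n) ^ p := by
            rw [hsplit]; exact hNp _ _
        _ ≤ C ^ p + 2 * (α₁ * α₂) ^ p := by linarith
        _ ≤ 4 * (C ^ p * (α₁ * α₂) ^ p) := by nlinarith
        _ = 4 * (C * (α₁ * α₂)) ^ p := by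
            rw [← Real.mul_rpow (by linarith) (by linarith)]
    have hRHSp : 4 * (C * (α₁ * α₂)) ^ p = ((4:ℝ) ^ (1/p) * C * α₁ * α₂) ^ p := by
      have h4 : ((4:ℝ) ^ (1/p)) ^ p = 4 := by
        rw [← Real.rpow_mul (by norm_num : (0:ℝ) ≤ 4), one_div_mul_cancel hp0.ne', Real.rpow_one]
      rw [show (4:ℝ) ^ (1/p) * C * α₁ * α₂ = (4:ℝ) ^ (1/p) * (C * (α₁ * α₂)) by ring,
        Real.mul_rpow hD0.le (by positivity), h4]
    have hNA : N (∑ n ∈ A, xs n f • x n) ≤ (4:ℝ) ^ (1/p) * C * α₁ * α₂ := by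
      rw [hRHSp] at hNAp
      exact (Real.rpow_le_rpow_iff (hN0 _) (by positivity) hp0).mp hNAp
    linarith
  -- conclude
  have hFle : F (a ^ (-p)) ≤ F m := hFmono _ _ hap0 hmge
  rw [one_div, inv_mul_le_iff₀ (by positivity)]
  calc F (a ^ (-p)) ≤ F m := hFle
    _ ≤ (4:ℝ) ^ (1/p) * C * α₁ * α₂ := key
    _ = (4:ℝ) ^ (1/p) * α₁ * α₂ * C := by ring
end

section
/- Let (x_n) be a truncation quasi-greedy basis of a p-Banach space X (0 < p ≤ 1). Then its near unconditionality function satisfies φ(a) ≤ 2C·(2 - log₂ a)^{1/p} for all 0 < a ≤ 1, where C is the constant from the truncation-quasi-greedy ‘quasi-unconditionality’ lemma. In particular φ(a) ≲ (1 - log a)^{1/p}. -/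
/-- Let `(x_n)` be a truncation quasi-greedy basis of a `p`-Banach space `X`
(`0 < p ≤ 1`), with `C` the constant from the truncation-quasi-greedy
`quasi-unconditionality' lemma: `‖Σ_{n∈A} a_n x_n‖ ≤ C‖f‖` whenever
`max_{n∈A}|a_n| ≤ min_{n∈A}|x*_n(f)|`. Then the near unconditionality function satisfies
`φ(a) ≤ 2C·(2 - log₂ a)^{1/p}` for `0 < a ≤ 1`: for every `f` with `sup_n |x*_n(f)| ≤ 1`
and every `A ⊆ {n : |x*_n(f)| ≥ a}`, `N(S_A f) ≤ 2C(2 - log₂ a)^{1/p}·N(f)`. -/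
theorem stmt_12 {X : Type*} [AddCommGroup X] [Module ℝ X]
    (N : X → ℝ) (p : ℝ) (hp0 : 0 < p) (hp1 : p ≤ 1)
    (hN0 : ∀ f, 0 ≤ N f) (hNdef : ∀ f, N f = 0 → f = 0)
    (hNsmul : ∀ (t : ℝ) (f : X), N (t • f) = |t| * N f)
    (hNp : ∀ f g : X, N (f + g) ^ p ≤ N f ^ p + N g ^ p)
    (x : ℕ → X) (xs : ℕ → X →ₗ[ℝ] ℝ)
    (hbi : ∀ n k, xs n (x k) = if n = k then 1 else 0)
    (C : ℝ) (hC1 : 1 ≤ C)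
    (hLemma : ∀ (f : X) (A : Finset ℕ) (a : ℕ → ℝ),
      (∀ n ∈ A, ∀ k ∈ A, |a n| ≤ |xs k f|) →
      N (∑ n ∈ A, a n • x n) ≤ C * N f) :
    ∀ a : ℝ, 0 < a → a ≤ 1 → ∀ f : X, (∀ n, |xs n f| ≤ 1) →
      ∀ A : Finset ℕ, (∀ n ∈ A, a ≤ |xs n f|) →
        N (∑ n ∈ A, xs n f • x n) ≤
          2 * C * (2 - Real.logb 2 a) ^ (1 / p) * N f := by
  intro a ha0 ha1 f hf1 A hA
  have hNf : 0 ≤ N f := hN0 f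
  have hC0 : (0:ℝ) < C := lt_of_lt_of_le one_pos hC1
  have hN0' : N (0:X) = 0 := by
    have := hNsmul 0 0
    simpa using this
  have hb : (1:ℝ) < 2 := one_lt_two
  have hvpos : ∀ n ∈ A, 0 < |xs n f| := fun n hn => lt_of_lt_of_le ha0 (hA n hn)
  -- level function
  set t : ℕ → ℕ := fun n => ⌊Real.logb 2 (|xs n f|)⁻¹⌋₊ with ht
  set L : ℕ := ⌊-Real.logb 2 a⌋₊ + 1 with hL
  have hlogba : 0 ≤ -Real.logb 2 a := by
    rw [neg_nonneg]
    exact Real.logb_nonpos hb ha0.le ha1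
  have htmem : ∀ n ∈ A, t n ∈ Finset.range L := by
    intro n hn
    rw [Finset.mem_range, hL, Nat.lt_succ_iff]
    apply Nat.floor_le_floor
    rw [← Real.logb_inv]
    have hinv : (|xs n f|)⁻¹ ≤ a⁻¹ := by
      rw [← one_div, ← one_div]
      exact one_div_le_one_div_of_le ha0 (hA n hn)
    exact Real.logb_le_logb_of_le hb (inv_pos.mpr (hvpos n hn)) hinv
  -- bounds on each level
  have hlevel_bounds : ∀ k, ∀ n ∈ A.filter (fun n => t n = k),
      ((2:ℝ)^(k+1))⁻¹ < |xs n f| ∧ |xs n f| ≤ ((2:ℝ)^k)⁻¹ := by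
    intro k n hn
    rw [Finset.mem_filter] at hn
    obtain ⟨hnA, hnk⟩ := hn
    have hv : 0 < |xs n f| := hvpos n hnA
    have hvinv : (0:ℝ) < (|xs n f|)⁻¹ := by positivity
    have hlog0 : 0 ≤ Real.logb 2 (|xs n f|)⁻¹ := by
      apply Real.logb_nonneg hb
      rw [le_inv_comm₀ one_pos hv]
      simpa using hf1 n
    have hnk' : ⌊Real.logb 2 (|xs n f|)⁻¹⌋₊ = k := hnk
    constructor
    · have h1 : Real.logb 2 (|xs n f|)⁻¹ < (k:ℝ) + 1 := by
        have h := Nat.lt_floor_add_one (Real.logb 2 (|xs n f|)⁻¹)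
        rw [hnk'] at h
        exact_mod_cast h
      rw [Real.logb_lt_iff_lt_rpow hb hvinv] at h1
      have h2 : (|xs n f|)⁻¹ < (2:ℝ)^(k+1) := by
        rwa [show ((k:ℝ)+1) = ((k+1 : ℕ):ℝ) by push_cast; ring,
          Real.rpow_natCast] at h1
      have h3 := inv_strictAnti₀ hvinv h2
      rwa [inv_inv] at h3
    · have h1 : (k:ℝ) ≤ Real.logb 2 (|xs n f|)⁻¹ := by
        rw [← hnk']
        exact Nat.floor_le hlog0
      rw [Real.le_logb_iff_rpow_le hb hvinv, Real.rpow_natCast] at h1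
      rw [le_inv_comm₀ hv (by positivity)]
      exact h1
  -- bound on each level block
  have hlevel : ∀ k, N (∑ n ∈ A.filter (fun n => t n = k), xs n f • x n)
      ≤ 2 * (C * N f) := by
    intro k
    set B := A.filter (fun n => t n = k) with hB
    have hcoef : ∀ n ∈ B, ∀ m ∈ B, |xs n f / 2| ≤ |xs m f| := by
      intro n hn m hm
      have h1 := (hlevel_bounds k n hn).2
      have h2 := (hlevel_bounds k m hm).1
      have : |xs n f / 2| = |xs n f| / 2 := by
        rw [abs_div]; norm_num
      rw [this]
      have h3 : |xs n f| / 2 ≤ ((2:ℝ)^(k+1))⁻¹ := by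
        rw [pow_succ]
        rw [div_le_iff₀ (by norm_num : (0:ℝ) < 2)] at *
        calc |xs n f| ≤ ((2:ℝ)^k)⁻¹ := h1
          _ = ((2:ℝ)^k * 2)⁻¹ * 2 := by
              rw [mul_inv]; field_simp
      exact h3.trans h2.le
    have h1 := hLemma f B (fun n => xs n f / 2) hcoef
    have h2 : ∑ n ∈ B, xs n f • x n = (2:ℝ) • ∑ n ∈ B, (xs n f / 2) • x n := by
      rw [Finset.smul_sum]
      apply Finset.sum_congr rfl
      intro n _
      rw [smul_smul]
      congr 1
      ring
    rw [h2, hNsmul]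
    calc |(2:ℝ)| * N (∑ n ∈ B, (xs n f / 2) • x n)
        ≤ |(2:ℝ)| * (C * N f) := by
          apply mul_le_mul_of_nonneg_left h1 (abs_nonneg _)
      _ = 2 * (C * N f) := by rw [abs_of_pos (by norm_num : (0:ℝ) < 2)]
  -- p-triangle inequality over finsets
  have hptri : ∀ (s : Finset ℕ) (g : ℕ → X),
      N (∑ i ∈ s, g i) ^ p ≤ ∑ i ∈ s, N (g i) ^ p := by
    intro s g
    induction s using Finset.cons_induction with
    | empty => simp [hN0', Real.zero_rpow hp0.ne']
    | cons i s hi ih =>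
      rw [Finset.sum_cons, Finset.sum_cons]
      calc N (g i + ∑ j ∈ s, g j) ^ p
          ≤ N (g i) ^ p + N (∑ j ∈ s, g j) ^ p := hNp _ _
        _ ≤ N (g i) ^ p + ∑ j ∈ s, N (g j) ^ p := add_le_add_right ih _
  -- main estimate in p-th power
  have hsum : ∑ n ∈ A, xs n f • x n
      = ∑ k ∈ Finset.range L, ∑ n ∈ A.filter (fun n => t n = k), xs n f • x n :=
    (Finset.sum_fiberwise_of_maps_to htmem _).symm
  have hmain : N (∑ n ∈ A, xs n f • x n) ^ p ≤ (L:ℝ) * (2 * (C * N f)) ^ p := by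
    rw [hsum]
    calc N (∑ k ∈ Finset.range L, ∑ n ∈ A.filter (fun n => t n = k), xs n f • x n) ^ p
        ≤ ∑ k ∈ Finset.range L,
            N (∑ n ∈ A.filter (fun n => t n = k), xs n f • x n) ^ p := hptri _ _
      _ ≤ ∑ k ∈ Finset.range L, (2 * (C * N f)) ^ p := by
          apply Finset.sum_le_sum
          intro k _
          exact Real.rpow_le_rpow (hN0 _) (hlevel k) hp0.le
      _ = (L:ℝ) * (2 * (C * N f)) ^ p := by
          rw [Finset.sum_const, Finset.card_range, nsmul_eq_mul]
  have h2C : (0:ℝ) ≤ 2 * (C * N f) := by positivity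
  have hS0 : 0 ≤ N (∑ n ∈ A, xs n f • x n) := hN0 _
  have hfinal : N (∑ n ∈ A, xs n f • x n) ≤ (L:ℝ) ^ (1/p) * (2 * (C * N f)) := by
    have heq : N (∑ n ∈ A, xs n f • x n)
        = (N (∑ n ∈ A, xs n f • x n) ^ p) ^ (1/p) := by
      rw [← Real.rpow_mul hS0, mul_one_div_cancel hp0.ne', Real.rpow_one]
    rw [heq]
    calc (N (∑ n ∈ A, xs n f • x n) ^ p) ^ (1/p)
        ≤ ((L:ℝ) * (2 * (C * N f)) ^ p) ^ (1/p) :=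
          Real.rpow_le_rpow (Real.rpow_nonneg hS0 _) hmain (by positivity)
      _ = (L:ℝ) ^ (1/p) * (2 * (C * N f)) := by
          rw [Real.mul_rpow (Nat.cast_nonneg _) (Real.rpow_nonneg h2C _),
            ← Real.rpow_mul h2C, mul_one_div_cancel hp0.ne', Real.rpow_one]
  have hLle : (L:ℝ) ≤ 2 - Real.logb 2 a := by
    rw [hL]
    push_cast
    have := Nat.floor_le hlogba
    linarith
  have hmono : (L:ℝ) ^ (1/p) ≤ (2 - Real.logb 2 a) ^ (1/p) :=
    Real.rpow_le_rpow (Nat.cast_nonneg _) hLle (by positivity)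
  calc N (∑ n ∈ A, xs n f • x n) ≤ (L:ℝ) ^ (1/p) * (2 * (C * N f)) := hfinal
    _ ≤ (2 - Real.logb 2 a) ^ (1/p) * (2 * (C * N f)) :=
        mul_le_mul_of_nonneg_right hmono h2C
    _ = 2 * C * (2 - Real.logb 2 a) ^ (1 / p) * N f := by ring
end

section
/- Let X be a Banach space and (x_n) a quasi-greedy basis of X. Suppose there exist C₀ ≥ 1 and p ∈ (1,∞) such that ‖Σ_{k=1}^m f_k‖^p ≤ C₀^p Σ_{k=1}^m ‖f_k‖^p whenever (f_k)_{k=1}^m are disjointly supported finite linear combinations of (x_n) with max_{n∈supp f_k}|x*_n(f_k)| ≤ min_{n∈supp f_{k-1}}|x*_n(f_{k-1})| for 2 ≤ k ≤ m, and suppose further there is C with ‖Σ_{n∈A} a_n x_n‖ ≤ C‖f‖ whenever max_{n∈A}|a_n| ≤ min_{n∈A}|x*_n(f)|. Then the near unconditionality function satisfies φ(a) ≤ 2CC₀(2 - log₂ a)^{1/p} for all 0 < a ≤ 1. -/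
/-- Let `(x_n)` be a quasi-greedy basis of a Banach space `X` satisfying
(i) an upper `p`-estimate with constant `C₀` for disjointly supported sums with decreasing
coefficient levels, and (ii) the quasi-unconditionality estimate with constant `C`
(`‖Σ_{n∈A} a_n x_n‖ ≤ C‖f‖` whenever `max_{n∈A}|a_n| ≤ min_{n∈A}|x*_n f|`). Then its near
unconditionality function satisfies `φ(a) ≤ 2CC₀(2 - log₂ a)^{1/p}` for `0 < a ≤ 1`. -/
theorem stmt_13 {X : Type*} [NormedAddCommGroup X] [NormedSpace ℝ X] [CompleteSpace X]
    (x : ℕ → X) (xs : ℕ → X →L[ℝ] ℝ)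
    (hbi : ∀ n k, xs n (x k) = if n = k then 1 else 0)
    (C₀ p : ℝ) (hC₀ : 1 ≤ C₀) (hp : 1 < p)
    (hupper : ∀ (m : ℕ) (A : ℕ → Finset ℕ) (c : ℕ → ℕ → ℝ) (f : ℕ → X),
      (∀ k, 1 ≤ k → k ≤ m → f k = ∑ n ∈ A k, c k n • x n) →
      (∀ k l, 1 ≤ k → k < l → l ≤ m → Disjoint (A k) (A l)) →
      (∀ k, 2 ≤ k → k ≤ m → ∀ n ∈ A k, ∀ n' ∈ A (k - 1), |c k n| ≤ |c (k - 1) n'|) →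
      ‖∑ k ∈ Finset.Icc 1 m, f k‖ ^ p ≤ C₀ ^ p * ∑ k ∈ Finset.Icc 1 m, ‖f k‖ ^ p)
    (C : ℝ) (hC1 : 1 ≤ C)
    (hLemma : ∀ (f : X) (A : Finset ℕ) (a : ℕ → ℝ),
      (∀ n ∈ A, ∀ k ∈ A, |a n| ≤ |xs k f|) →
      ‖∑ n ∈ A, a n • x n‖ ≤ C * ‖f‖) :
    ∀ a : ℝ, 0 < a → a ≤ 1 → ∀ f : X, (∀ n, |xs n f| ≤ 1) →
      ∀ A : Finset ℕ, (∀ n ∈ A, a ≤ |xs n f|) →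
        ‖∑ n ∈ A, xs n f • x n‖ ≤
          2 * C * C₀ * (2 - Real.logb 2 a) ^ (1 / p) * ‖f‖ := by
  intro a ha ha1 f hf A hA
  have hp0 : (0:ℝ) < p := lt_trans one_pos hp
  have hC0pos : (0:ℝ) < C₀ := lt_of_lt_of_le one_pos hC₀
  have hCpos : (0:ℝ) < C := lt_of_lt_of_le one_pos hC1
  set L : ℝ := Real.logb 2 a⁻¹ with hLdef
  have hL0 : 0 ≤ L := Real.logb_nonneg one_lt_two (one_le_inv_iff₀.mpr ⟨ha, ha1⟩)
  set m : ℕ := ⌈L⌉₊ + 1 with hmdef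
  have hm1 : 1 ≤ m := Nat.le_add_left 1 _
  set w : ℕ → ℝ := fun k => (2:ℝ) ^ (-(k:ℤ)) with hwdef
  have hwpos : ∀ k, 0 < w k := fun k => zpow_pos two_pos _
  have hwmono : ∀ {k l : ℕ}, k ≤ l → w l ≤ w k := by
    intro k l h
    exact zpow_le_zpow_right₀ one_le_two (by omega)
  have hwstep : ∀ k : ℕ, 1 ≤ k → w (k - 1) = 2 * w k := by
    intro k hk
    have h : (-(((k:ℕ) - 1 : ℕ) : ℤ)) = -(k:ℤ) + 1 := by omega
    simp only [hwdef]
    rw [h, zpow_add_one₀ (two_ne_zero : (2:ℝ) ≠ 0)]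
    ring
  -- 2^(-m) ≤ a
  have hwm : w m ≤ a := by
    have h1 : w m = (2:ℝ) ^ ((-(m:ℤ) : ℝ)) := by
      simp only [hwdef]
      rw [← Real.rpow_intCast]
      norm_cast
    have h2 : ((-(m:ℤ):ℝ)) ≤ Real.logb 2 a := by
      have hL' : L = -Real.logb 2 a := Real.logb_inv (b := 2) (x := a)
      have hcl : L ≤ (⌈L⌉₊ : ℝ) := Nat.le_ceil L
      have : (m : ℝ) = (⌈L⌉₊ : ℝ) + 1 := by push_cast [hmdef]; ring
      push_cast
      nlinarith
    calc w m = (2:ℝ) ^ ((-(m:ℤ):ℝ)) := h1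
      _ ≤ (2:ℝ) ^ (Real.logb 2 a) := Real.rpow_le_rpow_of_exponent_le one_le_two h2
      _ = a := Real.rpow_logb two_pos (by norm_num) ha
  have hm2 : (m:ℝ) ≤ 2 - Real.logb 2 a := by
    have hcl : (⌈L⌉₊ : ℝ) < L + 1 := Nat.ceil_lt_add_one hL0
    have hL' : L = -Real.logb 2 a := Real.logb_inv (b := 2) (x := a)
    have : (m : ℝ) = (⌈L⌉₊ : ℝ) + 1 := by push_cast [hmdef]; ring
    linarith
  -- level sets
  set B : ℕ → Finset ℕ := fun k =>
    A.filter (fun n => w k ≤ |xs n f| ∧ (k = 1 ∨ |xs n f| < w (k - 1))) with hBdef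
  have hdisj : ∀ k l, 1 ≤ k → k < l → Disjoint (B k) (B l) := by
    intro k l hk hkl
    rw [Finset.disjoint_left]
    intro n hnk hnl
    simp only [hBdef, Finset.mem_filter] at hnk hnl
    have hl2 : 2 ≤ l := by omega
    have hl := hnl.2.2.resolve_left (by omega)
    have : w (l - 1) ≤ w k := hwmono (by omega)
    have := hnk.2.1
    linarith
  have hcover : A = (Finset.Icc 1 m).biUnion B := by
    ext n
    simp only [Finset.mem_biUnion, Finset.mem_Icc, hBdef, Finset.mem_filter]
    constructor
    · intro hn
      have hva : a ≤ |xs n f| := hA n hn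
      have hex : ∃ k, w k ≤ |xs n f| := ⟨m, le_trans hwm hva⟩
      set k0 := Nat.find hex with hk0def
      have hk0m : k0 ≤ m := Nat.find_le (le_trans hwm hva)
      by_cases h1 : k0 ≤ 1
      · refine ⟨1, ⟨le_refl 1, hm1⟩, hn, ?_, Or.inl rfl⟩
        exact le_trans (hwmono h1) (Nat.find_spec hex)
      · have hk02 : 2 ≤ k0 := by omega
        refine ⟨k0, ⟨by omega, hk0m⟩, hn, Nat.find_spec hex, Or.inr ?_⟩
        have := Nat.find_min hex (m := k0 - 1) (by omega)
        push_neg at this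
        exact this
    · rintro ⟨k, _, hn, _⟩
      exact hn
  set fv : ℕ → X := fun k => ∑ n ∈ B k, xs n f • x n with hfvdef
  have hpd : (↑(Finset.Icc 1 m) : Set ℕ).PairwiseDisjoint B := by
    intro k hk l hl hkl
    simp only [Finset.coe_Icc, Set.mem_Icc] at hk hl
    rcases lt_or_gt_of_ne hkl with h | h
    · exact hdisj k l hk.1 h
    · exact (hdisj l k hl.1 h).symm
  have hSsum : ∑ n ∈ A, xs n f • x n = ∑ k ∈ Finset.Icc 1 m, fv k := by
    rw [hcover, Finset.sum_biUnion hpd]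
  -- each piece bounded
  have hfk : ∀ k, 1 ≤ k → ‖fv k‖ ≤ 2 * C * ‖f‖ := by
    intro k hk
    have hcond : ∀ n ∈ B k, ∀ k' ∈ B k, |xs n f / 2| ≤ |xs k' f| := by
      intro n hn k' hk'
      simp only [hBdef, Finset.mem_filter] at hn hk'
      have h2 : |xs n f| ≤ 2 * w k := by
        rcases hn.2.2 with h | h
        · have : w 1 = 2⁻¹ := by norm_num [hwdef]
          rw [h, this]
          have := hf n
          linarith
        · rw [← hwstep k hk]; exact le_of_lt h
      have h3 : w k ≤ |xs k' f| := hk'.2.1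
      rw [abs_div]
      rw [div_le_iff₀ (by norm_num : (0:ℝ) < |(2:ℝ)|)]
      have : |(2:ℝ)| = 2 := by norm_num
      rw [this]
      nlinarith [hwpos k]
    have := hLemma f (B k) (fun n => xs n f / 2) hcond
    have heq : ∑ n ∈ B k, (xs n f / 2) • x n = (2⁻¹ : ℝ) • fv k := by
      rw [hfvdef]
      simp only [Finset.smul_sum, smul_smul]
      congr 1
      ext n
      congr 1
      ring
    rw [heq, norm_smul] at this
    simp only [norm_inv, Real.norm_ofNat] at this
    have h4 : ‖fv k‖ = 2 * (2⁻¹ * ‖fv k‖) := by ring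
    rw [h4]
    nlinarith
  -- upper p-estimate
  have h1 : ‖∑ k ∈ Finset.Icc 1 m, fv k‖ ^ p ≤ C₀ ^ p * ∑ k ∈ Finset.Icc 1 m, ‖fv k‖ ^ p := by
    refine hupper m B (fun _ n => xs n f) fv (fun k _ _ => rfl) (fun k l hk hkl _ => hdisj k l hk hkl) ?_
    intro k hk2 _ n hn n' hn'
    simp only [hBdef, Finset.mem_filter] at hn hn'
    have h := hn.2.2.resolve_left (by omega)
    have h' : w (k - 1) ≤ |xs n' f| := hn'.2.1
    linarith
  set N : ℝ := 2 * C * ‖f‖ with hNdef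
  have hN0 : 0 ≤ N := by positivity
  have h2 : ∑ k ∈ Finset.Icc 1 m, ‖fv k‖ ^ p ≤ (m : ℝ) * N ^ p := by
    calc ∑ k ∈ Finset.Icc 1 m, ‖fv k‖ ^ p ≤ ∑ k ∈ Finset.Icc 1 m, N ^ p := by
          refine Finset.sum_le_sum ?_
          intro k hk
          simp only [Finset.mem_Icc] at hk
          exact Real.rpow_le_rpow (norm_nonneg _) (hfk k hk.1) (le_of_lt hp0)
      _ = (m : ℝ) * N ^ p := by
          rw [Finset.sum_const, Nat.card_Icc]
          simp [nsmul_eq_mul]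
  have key : ‖∑ n ∈ A, xs n f • x n‖ ^ p ≤ (C₀ * N) ^ p * (m : ℝ) := by
    rw [hSsum]
    calc ‖∑ k ∈ Finset.Icc 1 m, fv k‖ ^ p ≤ C₀ ^ p * ∑ k ∈ Finset.Icc 1 m, ‖fv k‖ ^ p := h1
      _ ≤ C₀ ^ p * ((m : ℝ) * N ^ p) := by
          exact mul_le_mul_of_nonneg_left h2 (Real.rpow_nonneg (le_of_lt hC0pos) p)
      _ = (C₀ * N) ^ p * (m : ℝ) := by
          rw [Real.mul_rpow (le_of_lt hC0pos) hN0]; ring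
  have hSnn : 0 ≤ ‖∑ n ∈ A, xs n f • x n‖ := norm_nonneg _
  have hfin : ‖∑ n ∈ A, xs n f • x n‖ = (‖∑ n ∈ A, xs n f • x n‖ ^ p) ^ (1/p) := by
    rw [← Real.rpow_mul hSnn, mul_one_div_cancel (ne_of_gt hp0), Real.rpow_one]
  rw [hfin]
  have hCN0 : 0 ≤ C₀ * N := by positivity
  calc (‖∑ n ∈ A, xs n f • x n‖ ^ p) ^ (1/p)
      ≤ ((C₀ * N) ^ p * (m : ℝ)) ^ (1/p) := by
        refine Real.rpow_le_rpow (Real.rpow_nonneg hSnn p) key (by positivity)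
    _ = (C₀ * N) * (m : ℝ) ^ (1/p) := by
        rw [Real.mul_rpow (Real.rpow_nonneg hCN0 p) (Nat.cast_nonneg m),
          ← Real.rpow_mul hCN0, mul_one_div_cancel (ne_of_gt hp0), Real.rpow_one]
    _ ≤ (C₀ * N) * (2 - Real.logb 2 a) ^ (1/p) := by
        refine mul_le_mul_of_nonneg_left ?_ hCN0
        exact Real.rpow_le_rpow (Nat.cast_nonneg m) hm2 (by positivity)
    _ = 2 * C * C₀ * (2 - Real.logb 2 a) ^ (1/p) * ‖f‖ := by rw [hNdef]; ring
end

section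
/- Let S be a subsymmetric sequence Banach space and σ an ordered partition of ℕ into finite sets. Let P_σ : c₀₀ → c₀₀ be the averaging projection: (P_σ f)_k = Ave(f, σ_n) for k ∈ σ_n, where Ave(f,A) = |A|^{-1} Σ_{k∈A} f_k. Then ‖P_σ(f)‖_S ≤ 2‖f‖_S for all f ∈ c₀₀, and hence ‖f - P_σ(f)‖_S ≤ 3‖f‖_S. -/
open Classical in
/-- The averaging projection associated with a partition `σ` of `ℕ` into finite blocks:
`(P_σ f)_k = Ave(f, σ_n)` for `k ∈ σ_n`. -/
noncomputable def avgProj (σ : ℕ → Finset ℕ) (f : ℕ → ℝ) : ℕ → ℝ := fun k =>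
  if h : ∃ n, k ∈ σ n then (∑ i ∈ σ h.choose, f i) / (σ h.choose).card else 0

open Function

/-- block index of k -/
noncomputable def blk (σ : ℕ → Finset ℕ) (hcov : ∀ k, ∃ n, k ∈ σ n) (k : ℕ) : ℕ :=
  (hcov k).choose

lemma blk_mem (σ : ℕ → Finset ℕ) (hcov : ∀ k, ∃ n, k ∈ σ n) (k : ℕ) :
    k ∈ σ (blk σ hcov k) := (hcov k).choose_spec

lemma blk_unique (σ : ℕ → Finset ℕ) (hcov : ∀ k, ∃ n, k ∈ σ n)
    (hdisj : ∀ m n, m ≠ n → Disjoint (σ m) (σ n)) {k n : ℕ} (hk : k ∈ σ n) :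
    blk σ hcov k = n := by
  by_contra h
  exact (Finset.disjoint_left.1 (hdisj _ _ h)) (blk_mem σ hcov k) hk

/-- sorted enumeration of block n, totalized -/
noncomputable def bb (σ : ℕ → Finset ℕ) (n j : ℕ) : ℕ :=
  if h : j < (σ n).card then (((σ n).orderIsoOfFin rfl) ⟨j, h⟩ : ℕ) else 0

lemma bb_mem (σ : ℕ → Finset ℕ) {n j : ℕ} (h : j < (σ n).card) : bb σ n j ∈ σ n := by
  rw [bb, dif_pos h]; exact (((σ n).orderIsoOfFin rfl) ⟨j, h⟩).2

lemma bb_lt (σ : ℕ → Finset ℕ) {n j j' : ℕ} (h : j < j') (h' : j' < (σ n).card) :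
    bb σ n j < bb σ n j' := by
  rw [bb, bb, dif_pos (lt_trans h h'), dif_pos h']
  have := ((σ n).orderIsoOfFin rfl).lt_iff_lt.2 (show (⟨j, lt_trans h h'⟩ : Fin _) < ⟨j', h'⟩ from h)
  exact this

lemma bb_inj (σ : ℕ → Finset ℕ) {n j j' : ℕ} (h : j < (σ n).card) (h' : j' < (σ n).card)
    (he : bb σ n j = bb σ n j') : j = j' := by
  rcases lt_trichotomy j j' with hc | hc | hc
  · exact absurd he (ne_of_lt (bb_lt σ hc h'))
  · exact hc
  · exact absurd he.symm (ne_of_lt (bb_lt σ hc h))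

/-- index of k within its block -/
noncomputable def idx (σ : ℕ → Finset ℕ) (hcov : ∀ k, ∃ n, k ∈ σ n) (k : ℕ) : ℕ :=
  ((((σ (blk σ hcov k)).orderIsoOfFin rfl).symm ⟨k, blk_mem σ hcov k⟩ : Fin _) : ℕ)

lemma idx_lt (σ : ℕ → Finset ℕ) (hcov : ∀ k, ∃ n, k ∈ σ n) (k : ℕ) :
    idx σ hcov k < (σ (blk σ hcov k)).card :=
  (((σ (blk σ hcov k)).orderIsoOfFin rfl).symm ⟨k, blk_mem σ hcov k⟩).2

lemma bb_idx (σ : ℕ → Finset ℕ) (hcov : ∀ k, ∃ n, k ∈ σ n) (k : ℕ) :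
    bb σ (blk σ hcov k) (idx σ hcov k) = k := by
  rw [bb, dif_pos (idx_lt σ hcov k)]
  have : (⟨idx σ hcov k, idx_lt σ hcov k⟩ : Fin (σ (blk σ hcov k)).card)
      = ((σ (blk σ hcov k)).orderIsoOfFin rfl).symm ⟨k, blk_mem σ hcov k⟩ := rfl
  rw [this, OrderIso.apply_symm_apply]

lemma blk_bb (σ : ℕ → Finset ℕ) (hcov : ∀ k, ∃ n, k ∈ σ n)
    (hdisj : ∀ m n, m ≠ n → Disjoint (σ m) (σ n)) {n j : ℕ} (h : j < (σ n).card) :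
    blk σ hcov (bb σ n j) = n :=
  blk_unique σ hcov hdisj (bb_mem σ h)

lemma idx_bb (σ : ℕ → Finset ℕ) (hcov : ∀ k, ∃ n, k ∈ σ n)
    (hdisj : ∀ m n, m ≠ n → Disjoint (σ m) (σ n)) {n j : ℕ} (h : j < (σ n).card) :
    idx σ hcov (bb σ n j) = j := by
  have hb := blk_bb σ hcov hdisj h
  have h1 := bb_idx σ hcov (bb σ n j)
  rw [hb] at h1
  have h2 := idx_lt σ hcov (bb σ n j)
  rw [hb] at h2
  exact bb_inj σ h2 h h1

/-- blocks are ordered -/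
lemma block_order (σ : ℕ → Finset ℕ) (hne : ∀ n, (σ n).Nonempty)
    (hord : ∀ n, ∀ i ∈ σ n, ∀ j ∈ σ (n + 1), i < j) :
    ∀ m n, m < n → ∀ i ∈ σ m, ∀ j ∈ σ n, i < j := by
  have key : ∀ d m, ∀ i ∈ σ m, ∀ j ∈ σ (m + 1 + d), i < j := by
    intro d
    induction d with
    | zero => intro m i hi j hj; exact hord m i hi j hj
    | succ d ih =>
      intro m i hi j hj
      obtain ⟨x, hx⟩ := hne (m + 1 + d)
      exact lt_trans (ih m i hi x hx) (hord (m + 1 + d) x hx j hj)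
  intro m n hmn i hi j hj
  have : n = m + 1 + (n - m - 1) := by omega
  exact key (n - m - 1) m i hi j (this ▸ hj)

/-- elements within a block: order matches index order -/
lemma idx_mono (σ : ℕ → Finset ℕ) (hcov : ∀ k, ∃ n, k ∈ σ n)
    (hdisj : ∀ m n, m ≠ n → Disjoint (σ m) (σ n)) {a a' : ℕ}
    (hb : blk σ hcov a = blk σ hcov a') (h : a < a') :
    idx σ hcov a < idx σ hcov a' := by
  rcases lt_trichotomy (idx σ hcov a) (idx σ hcov a') with hc | hc | hc
  · exact hc
  · exfalso
    have := bb_idx σ hcov a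
    rw [hb, hc, bb_idx σ hcov a'] at this
    omega
  · exfalso
    have h1 := bb_lt σ hc (hb ▸ idx_lt σ hcov a)
    rw [bb_idx σ hcov a'] at h1
    rw [show blk σ hcov a' = blk σ hcov a from hb.symm] at h1
    rw [bb_idx σ hcov a] at h1
    omega

lemma seminorm_sum_le {α : Type*} (N : (ℕ → ℝ) → ℝ)
    (hN0 : N 0 = 0) (hNadd : ∀ f g : ℕ → ℝ, N (f + g) ≤ N f + N g)
    (s : Finset α) (g : α → ℕ → ℝ) :
    N (∑ a ∈ s, g a) ≤ ∑ a ∈ s, N (g a) := by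
  classical
  induction s using Finset.induction with
  | empty => simp [hN0]
  | insert _ _ h ih =>
    rw [Finset.sum_insert h, Finset.sum_insert h]
    exact le_trans (hNadd _ _) (by linarith)

lemma spread_eq (N : (ℕ → ℝ) → ℝ)
    (hsub : ∀ f ε : ℕ → ℝ, (Function.support f).Finite → (∀ n, |ε n| = 1) →
      ∀ π : ℕ → ℕ, StrictMono π →
        N (Function.extend π (fun n => ε n * f n) (fun _ => 0)) = N f)
    (A : Set ℕ) (hA : A.Infinite)
    (g : ℕ → ℕ) (hg : ∀ a ∈ A, ∀ b ∈ A, a < b → g a < g b)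
    (f F : ℕ → ℝ) (hf : (Function.support f).Finite)
    (hsupp : Function.support f ⊆ A)
    (hF1 : ∀ a ∈ A, F (g a) = f a)
    (hF2 : ∀ k : ℕ, (∀ a ∈ A, g a ≠ k) → F k = 0) :
    N F = N f := by
  have hA' : {x | x ∈ A}.Infinite := hA
  set p := Nat.nth (· ∈ A) with hp
  have hpm : StrictMono p := Nat.nth_strictMono hA'
  have hpmem : ∀ i, p i ∈ A := fun i => Nat.nth_mem_of_infinite hA' i
  have hprange : ∀ a ∈ A, ∃ i, p i = a := by
    intro a ha
    have := Nat.range_nth_of_infinite hA'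
    have : a ∈ Set.range p := by rw [this]; exact ha
    exact this
  set u : ℕ → ℝ := fun i => f (p i) with hu
  have husup : (Function.support u).Finite := by
    have : Function.support u ⊆ p ⁻¹' (Function.support f) := by
      intro i hi; exact hi
    exact Set.Finite.subset (Set.Finite.preimage (Set.injOn_of_injective hpm.injective)
      hf) this
  set q : ℕ → ℕ := fun i => g (p i) with hq
  have hqm : StrictMono q := fun i j h => hg _ (hpmem i) _ (hpmem j) (hpm h)
  have e1 : f = Function.extend p (fun n => (1:ℝ) * u n) (fun _ => 0) := by
    funext k
    by_cases hk : k ∈ A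
    · obtain ⟨i, rfl⟩ := hprange k hk
      rw [hpm.injective.extend_apply]
      simp [hu]
    · rw [Function.extend_apply']
      · exact Function.support_subset_iff'.1 hsupp k hk
      · rintro ⟨i, rfl⟩; exact hk (hpmem i)
  have e2 : F = Function.extend q (fun n => (1:ℝ) * u n) (fun _ => 0) := by
    funext k
    by_cases hk : ∃ i, q i = k
    · obtain ⟨i, rfl⟩ := hk
      rw [hqm.injective.extend_apply]
      simp only [one_mul, hu]
      exact hF1 _ (hpmem i)
    · rw [Function.extend_apply' _ _ _ hk]
      refine hF2 k ?_
      intro a ha hak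
      obtain ⟨i, rfl⟩ := hprange a ha
      exact hk ⟨i, hak⟩
  have heps : ∀ n : ℕ, |(1:ℝ)| = 1 := fun _ => abs_one
  rw [e1, e2, hsub u (fun _ => 1) husup (fun _ => abs_one) q hqm,
    hsub u (fun _ => 1) husup (fun _ => abs_one) p hpm]

lemma restrict_le (N : (ℕ → ℝ) → ℝ)
    (hNsmul : ∀ (t : ℝ) (f : ℕ → ℝ), N (t • f) = |t| * N f)
    (hNadd : ∀ f g : ℕ → ℝ, N (f + g) ≤ N f + N g)
    (hsub : ∀ f ε : ℕ → ℝ, (Function.support f).Finite → (∀ n, |ε n| = 1) →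
      ∀ π : ℕ → ℕ, StrictMono π →
        N (Function.extend π (fun n => ε n * f n) (fun _ => 0)) = N f)
    (f : ℕ → ℝ) (hf : (Function.support f).Finite) (P : ℕ → Prop) [DecidablePred P] :
    N (fun k => if P k then f k else 0) ≤ N f := by
  set ε : ℕ → ℝ := fun k => if P k then 1 else -1 with hε
  have hεabs : ∀ n, |ε n| = 1 := by
    intro n; by_cases h : P n <;> simp [hε, h]
  have hNe : N (fun n => ε n * f n) = N f := by
    have := hsub f ε hf hεabs id strictMono_id
    have hid : Function.extend id (fun n => ε n * f n) (fun _ => 0) = fun n => ε n * f n := by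
      funext x
      exact Function.injective_id.extend_apply _ _ x
    rwa [hid] at this
  have key : (fun k => if P k then f k else 0)
      = (2:ℝ)⁻¹ • (f + fun n => ε n * f n) := by
    funext k
    by_cases h : P k <;> simp [hε, h] <;> ring
  rw [key, hNsmul]
  have := hNadd f (fun n => ε n * f n)
  rw [hNe] at this
  have h2 : |(2:ℝ)⁻¹| = 2⁻¹ := by norm_num
  rw [h2]
  linarith

lemma mod_two {x m : ℕ} (hm : 0 < m) (h : x < 2 * m) :
    x % m = if x < m then x else x - m := by
  split
  · exact Nat.mod_eq_of_lt ‹_›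
  · rw [Nat.mod_eq_sub_mod (by omega), Nat.mod_eq_of_lt (by omega)]

lemma inv_lemma {i j m : ℕ} (hm : 0 < m) (hi : i < m) (hj : j < m) :
    (i + (m - (i + (m - j)) % m)) % m = j := by
  rcases lt_or_ge (i + (m - j)) m with h | h
  · rw [Nat.mod_eq_of_lt h]
    have h2 : i + (m - (i + (m - j))) = j := by omega
    rw [h2, Nat.mod_eq_of_lt hj]
  · have h2 : (i + (m - j)) % m = i + (m - j) - m := by
      rw [mod_two hm (by omega), if_neg (by omega)]
    rw [h2]
    have h3 : i + (m - (i + (m - j) - m)) = j + m := by omega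
    rw [h3, Nat.add_mod_right, Nat.mod_eq_of_lt hj]

noncomputable def rot (σ : ℕ → Finset ℕ) (hcov : ∀ k, ∃ n, k ∈ σ n) (c : ℕ → ℕ)
    (f : ℕ → ℝ) : ℕ → ℝ := fun k =>
  f (bb σ (blk σ hcov k)
      ((idx σ hcov k + ((σ (blk σ hcov k)).card - c (blk σ hcov k))) % (σ (blk σ hcov k)).card))

lemma rot_le (N : (ℕ → ℝ) → ℝ)
    (hNsmul : ∀ (t : ℝ) (f : ℕ → ℝ), N (t • f) = |t| * N f)
    (hNadd : ∀ f g : ℕ → ℝ, N (f + g) ≤ N f + N g)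
    (hsub : ∀ f ε : ℕ → ℝ, (Function.support f).Finite → (∀ n, |ε n| = 1) →
      ∀ π : ℕ → ℕ, StrictMono π →
        N (Function.extend π (fun n => ε n * f n) (fun _ => 0)) = N f)
    (σ : ℕ → Finset ℕ) (hne : ∀ n, (σ n).Nonempty)
    (hdisj : ∀ m n, m ≠ n → Disjoint (σ m) (σ n))
    (hord : ∀ n, ∀ i ∈ σ n, ∀ j ∈ σ (n + 1), i < j)
    (hcov : ∀ k, ∃ n, k ∈ σ n)
    (M : ℕ) (c : ℕ → ℕ) (hc1 : ∀ n, c n < (σ n).card) (hc2 : ∀ n, M ≤ n → c n = 0)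
    (f : ℕ → ℝ) (hf : (Function.support f).Finite)
    (hM : ∀ k, M ≤ blk σ hcov k → f k = 0) :
    N (rot σ hcov c f) ≤ 2 * N f := by
  classical
  have hbo := block_order σ hne hord
  have hcardpos : ∀ n, 0 < (σ n).card := fun n => Finset.card_pos.2 (hne n)
  have hfin : (⋃ n ∈ Set.Iio M, (σ n : Set ℕ)).Finite :=
    Set.Finite.biUnion (Set.finite_Iio M) (fun n _ => (σ n).finite_toSet)
  -- the S part
  have NS : N (fun k => if c (blk σ hcov k) ≤ idx σ hcov k then rot σ hcov c f k else 0)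
      ≤ N f := by
    set A : Set ℕ := {a | idx σ hcov a + c (blk σ hcov a) < (σ (blk σ hcov a)).card} with hA
    have hAmem : ∀ a, a ∈ A ↔ idx σ hcov a + c (blk σ hcov a) < (σ (blk σ hcov a)).card :=
      fun a => Iff.rfl
    have hAblk : ∀ a, a ∉ A → blk σ hcov a < M := by
      intro a ha
      by_contra h
      exact ha ((hAmem a).2 (by
        have h0 := hc2 _ (not_lt.1 h)
        have := idx_lt σ hcov a
        omega))
    have hAinf : A.Infinite := by
      have hcompl : Aᶜ ⊆ ⋃ n ∈ Set.Iio M, (σ n : Set ℕ) := fun a ha =>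
        Set.mem_biUnion (hAblk a ha) (blk_mem σ hcov a)
      have := Set.Finite.infinite_compl (hfin.subset hcompl)
      rwa [compl_compl] at this
    set gA : ℕ → ℕ := fun a => bb σ (blk σ hcov a) (idx σ hcov a + c (blk σ hcov a)) with hgA
    have hgAmono : ∀ a ∈ A, ∀ b ∈ A, a < b → gA a < gA b := by
      intro a ha b hb hab
      rw [hAmem] at ha hb
      rcases lt_trichotomy (blk σ hcov a) (blk σ hcov b) with h | h | h
      · exact hbo _ _ h _ (bb_mem σ ha) _ (bb_mem σ hb)
      · have hia : idx σ hcov a < idx σ hcov b := idx_mono σ hcov hdisj h hab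
        show bb σ (blk σ hcov a) _ < bb σ (blk σ hcov b) _
        rw [h]
        exact bb_lt σ (by omega) hb
      · exact absurd (hbo _ _ h _ (blk_mem σ hcov b) _ (blk_mem σ hcov a)) (by omega)
    have heq : N (fun k => if c (blk σ hcov k) ≤ idx σ hcov k then rot σ hcov c f k else 0)
        = N (fun k => if k ∈ A then f k else 0) := by
      apply spread_eq N hsub A hAinf gA hgAmono
      · refine hf.subset fun k hk => ?_
        simp only [Function.mem_support] at hk ⊢
        intro h0
        apply hk
        split <;> simp [h0]
      · intro k hk
        by_contra h
        exact hk (if_neg h)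
      · -- hF1
        intro a ha
        have ha' := (hAmem a).1 ha
        have hblk : blk σ hcov (gA a) = blk σ hcov a := blk_bb σ hcov hdisj ha'
        have hidx : idx σ hcov (gA a) = idx σ hcov a + c (blk σ hcov a) :=
          idx_bb σ hcov hdisj ha'
        have hcond : c (blk σ hcov (gA a)) ≤ idx σ hcov (gA a) := by
          rw [hblk, hidx]; omega
        rw [if_pos hcond, if_pos ha]
        show rot σ hcov c f (gA a) = f a
        rw [rot]
        simp only [hblk, hidx]
        have hc := hc1 (blk σ hcov a)
        have harith : idx σ hcov a + c (blk σ hcov a) +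
            ((σ (blk σ hcov a)).card - c (blk σ hcov a))
            = idx σ hcov a + (σ (blk σ hcov a)).card := by omega
        rw [harith, Nat.add_mod_right, Nat.mod_eq_of_lt (idx_lt σ hcov a),
          bb_idx σ hcov a]
      · -- hF2
        intro k hk
        by_cases hcond : c (blk σ hcov k) ≤ idx σ hcov k
        · exfalso
          have hik := idx_lt σ hcov k
          have hcc := hc1 (blk σ hcov k)
          set a := bb σ (blk σ hcov k) (idx σ hcov k - c (blk σ hcov k)) with ha
          have hja : idx σ hcov k - c (blk σ hcov k) < (σ (blk σ hcov k)).card := by omega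
          have hblk : blk σ hcov a = blk σ hcov k := blk_bb σ hcov hdisj hja
          have hidx : idx σ hcov a = idx σ hcov k - c (blk σ hcov k) :=
            idx_bb σ hcov hdisj hja
          have haA : a ∈ A := (hAmem a).2 (by rw [hblk, hidx]; omega)
          apply hk a haA
          show bb σ (blk σ hcov a) (idx σ hcov a + c (blk σ hcov a)) = k
          rw [hblk, hidx]
          have : idx σ hcov k - c (blk σ hcov k) + c (blk σ hcov k) = idx σ hcov k := by
            omega
          rw [this, bb_idx σ hcov k]
        · exact if_neg hcond
    rw [heq]
    exact restrict_le N hNsmul hNadd hsub f hf (· ∈ A)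
  -- the T part
  have NT : N (fun k => if idx σ hcov k < c (blk σ hcov k) then rot σ hcov c f k else 0)
      ≤ N f := by
    set B : Set ℕ :=
      {a | (σ (blk σ hcov a)).card ≤ idx σ hcov a + c (blk σ hcov a) ∨ M ≤ blk σ hcov a}
      with hB
    have hBmem : ∀ a, a ∈ B ↔
        ((σ (blk σ hcov a)).card ≤ idx σ hcov a + c (blk σ hcov a) ∨ M ≤ blk σ hcov a) :=
      fun a => Iff.rfl
    have hBinf : B.Infinite := by
      have hcompl : Bᶜ ⊆ ⋃ n ∈ Set.Iio M, (σ n : Set ℕ) := by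
        intro a ha
        have : ¬ (M ≤ blk σ hcov a) := fun h => ha ((hBmem a).2 (Or.inr h))
        exact Set.mem_biUnion (not_le.1 this) (blk_mem σ hcov a)
      have := Set.Finite.infinite_compl (hfin.subset hcompl)
      rwa [compl_compl] at this
    set gB : ℕ → ℕ := fun a =>
      if blk σ hcov a < M then
        bb σ (blk σ hcov a) ((idx σ hcov a + c (blk σ hcov a)) % (σ (blk σ hcov a)).card)
      else a with hgB
    have hgBmem : ∀ a, gB a ∈ σ (blk σ hcov a) := by
      intro a
      show (if _ then _ else _) ∈ _
      split
      · exact bb_mem σ (Nat.mod_lt _ (hcardpos _))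
      · exact blk_mem σ hcov a
    have hgBmono : ∀ a ∈ B, ∀ b ∈ B, a < b → gB a < gB b := by
      intro a ha b hb hab
      rcases lt_trichotomy (blk σ hcov a) (blk σ hcov b) with h | h | h
      · have h1 := hgBmem a
        have h2 := hgBmem b
        exact hbo _ _ h _ h1 _ h2
      · by_cases hm : blk σ hcov a < M
        · have haw : (σ (blk σ hcov a)).card ≤ idx σ hcov a + c (blk σ hcov a) := by
            rcases (hBmem a).1 ha with h' | h'
            · exact h'
            · omega
          have hbw : (σ (blk σ hcov b)).card ≤ idx σ hcov b + c (blk σ hcov b) := by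
            rcases (hBmem b).1 hb with h' | h'
            · exact h'
            · omega
          have hia : idx σ hcov a < idx σ hcov b := idx_mono σ hcov hdisj h hab
          have hila := idx_lt σ hcov a
          have hilb := idx_lt σ hcov b
          have hca := hc1 (blk σ hcov a)
          have hcb := hc1 (blk σ hcov b)
          show (if _ then _ else _) < (if _ then _ else _)
          rw [if_pos hm, if_pos (show blk σ hcov b < M by omega)]
          rw [mod_two (hcardpos _) (by omega), mod_two (hcardpos _) (by omega)]
          rw [if_neg (by omega), if_neg (by omega)]
          rw [h] at haw hca hila ⊢
          exact bb_lt σ (by omega) (by omega)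
        · show (if _ then _ else _) < (if _ then _ else _)
          rw [if_neg hm, if_neg (by omega)]
          exact hab
      · exact absurd (hbo _ _ h _ (blk_mem σ hcov b) _ (blk_mem σ hcov a)) (by omega)
    have heq : N (fun k => if idx σ hcov k < c (blk σ hcov k) then rot σ hcov c f k else 0)
        = N (fun k => if k ∈ B then f k else 0) := by
      apply spread_eq N hsub B hBinf gB hgBmono
      · refine hf.subset fun k hk => ?_
        simp only [Function.mem_support] at hk ⊢
        intro h0
        apply hk
        split <;> simp [h0]
      · intro k hk
        by_contra h
        exact hk (if_neg h)
      · -- hF1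
        intro a ha
        rw [if_pos ha]
        by_cases hm : blk σ hcov a < M
        · have haw : (σ (blk σ hcov a)).card ≤ idx σ hcov a + c (blk σ hcov a) := by
            rcases (hBmem a).1 ha with h' | h'
            · exact h'
            · omega
          have hila := idx_lt σ hcov a
          have hca := hc1 (blk σ hcov a)
          have hga : gB a = bb σ (blk σ hcov a)
              (idx σ hcov a + c (blk σ hcov a) - (σ (blk σ hcov a)).card) := by
            show (if _ then _ else _) = _
            rw [if_pos hm, mod_two (hcardpos _) (by omega), if_neg (by omega)]
          have hv : idx σ hcov a + c (blk σ hcov a) - (σ (blk σ hcov a)).card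
              < (σ (blk σ hcov a)).card := by omega
          have hblk : blk σ hcov (gB a) = blk σ hcov a := by
            rw [hga]; exact blk_bb σ hcov hdisj hv
          have hidx : idx σ hcov (gB a)
              = idx σ hcov a + c (blk σ hcov a) - (σ (blk σ hcov a)).card := by
            rw [hga]; exact idx_bb σ hcov hdisj hv
          have hcond : idx σ hcov (gB a) < c (blk σ hcov (gB a)) := by
            rw [hblk, hidx]; omega
          rw [if_pos hcond]
          show rot σ hcov c f (gB a) = f a
          rw [rot]
          simp only [hblk, hidx]
          have harith : idx σ hcov a + c (blk σ hcov a) - (σ (blk σ hcov a)).card +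
              ((σ (blk σ hcov a)).card - c (blk σ hcov a)) = idx σ hcov a := by omega
          rw [harith, Nat.mod_eq_of_lt hila, bb_idx σ hcov a]
        · have hga : gB a = a := by
            show (if _ then _ else _) = _
            rw [if_neg hm]
          have hc0 : c (blk σ hcov a) = 0 := hc2 _ (not_lt.1 hm)
          rw [hga, if_neg (by rw [hc0]; omega)]
          exact (hM a (not_lt.1 hm)).symm
      · -- hF2
        intro k hk
        by_cases hcond : idx σ hcov k < c (blk σ hcov k)
        · exfalso
          have hik := idx_lt σ hcov k
          have hcc := hc1 (blk σ hcov k)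
          have hmk : blk σ hcov k < M := by
            by_contra h
            rw [hc2 _ (not_lt.1 h)] at hcond
            omega
          set w := idx σ hcov k + ((σ (blk σ hcov k)).card - c (blk σ hcov k)) with hw
          have hwlt : w < (σ (blk σ hcov k)).card := by omega
          set a := bb σ (blk σ hcov k) w with haa
          have hblk : blk σ hcov a = blk σ hcov k := blk_bb σ hcov hdisj hwlt
          have hidx : idx σ hcov a = w := idx_bb σ hcov hdisj hwlt
          have haB : a ∈ B := (hBmem a).2 (Or.inl (by rw [hblk, hidx]; omega))
          apply hk a haB
          show (if _ then _ else _) = k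
          rw [if_pos (by rw [hblk]; exact hmk)]
          have harith : (idx σ hcov a + c (blk σ hcov a)) % (σ (blk σ hcov a)).card
              = idx σ hcov k := by
            rw [hblk, hidx]
            have : w + c (blk σ hcov k) = idx σ hcov k + (σ (blk σ hcov k)).card := by
              omega
            rw [this, Nat.add_mod_right, Nat.mod_eq_of_lt hik]
          rw [harith, hblk, bb_idx σ hcov k]
        · exact if_neg hcond
    rw [heq]
    exact restrict_le N hNsmul hNadd hsub f hf (· ∈ B)
  -- combine
  have hST : rot σ hcov c f =
      (fun k => if c (blk σ hcov k) ≤ idx σ hcov k then rot σ hcov c f k else 0) +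
      (fun k => if idx σ hcov k < c (blk σ hcov k) then rot σ hcov c f k else 0) := by
    funext k
    by_cases h : c (blk σ hcov k) ≤ idx σ hcov k
    · simp [Pi.add_apply, if_pos h, if_neg (not_lt.2 h)]
    · simp [Pi.add_apply, if_neg h, if_pos (not_le.1 h)]
  calc N (rot σ hcov c f) ≤ _ + _ := hST ▸ hNadd _ _
    _ ≤ 2 * N f := by linarith

lemma block_sum (σ : ℕ → Finset ℕ) (hcov : ∀ k, ∃ n, k ∈ σ n)
    (hdisj : ∀ m n, m ≠ n → Disjoint (σ m) (σ n)) (n : ℕ) (f : ℕ → ℝ) :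
    ∑ j ∈ Finset.range (σ n).card, f (bb σ n j) = ∑ x ∈ σ n, f x := by
  refine Finset.sum_nbij' (fun j => bb σ n j) (fun x => idx σ hcov x) ?_ ?_ ?_ ?_ ?_
  · intro j hj
    exact bb_mem σ (Finset.mem_range.1 hj)
  · intro x hx
    have hb : blk σ hcov x = n := blk_unique σ hcov hdisj hx
    have := idx_lt σ hcov x
    rw [hb] at this
    exact Finset.mem_range.2 this
  · intro j hj
    exact idx_bb σ hcov hdisj (Finset.mem_range.1 hj)
  · intro x hx
    have hb : blk σ hcov x = n := blk_unique σ hcov hdisj hx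
    have := bb_idx σ hcov x
    rwa [hb] at this
  · intro j hj
    rfl

lemma avgProj_eq (σ : ℕ → Finset ℕ) (hcov : ∀ k, ∃ n, k ∈ σ n) (f : ℕ → ℝ) (k : ℕ) :
    avgProj σ f k = (∑ i ∈ σ (blk σ hcov k), f i) / (σ (blk σ hcov k)).card := by
  rw [avgProj, dif_pos (hcov k)]
  rfl

lemma sum_pi_fin {M : ℕ} (m : Fin M → ℕ) (i₀ : Fin M) (G : Fin (m i₀) → ℝ) :
    ∑ r : (∀ i, Fin (m i)), G (r i₀)
      = (Fintype.card (∀ j : {j : Fin M // j ≠ i₀}, Fin (m j.1))) • ∑ j : Fin (m i₀), G j := by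
  classical
  rw [Fintype.sum_equiv (Equiv.piSplitAt i₀ (fun i => Fin (m i))) _ (fun x => G x.1)
    (fun r => by rw [Equiv.piSplitAt_apply])]
  rw [Fintype.sum_prod_type]
  simp only [Finset.sum_const, Finset.card_univ]
  rw [← Finset.smul_sum]

lemma card_pi_fin {M : ℕ} (m : Fin M → ℕ) (i₀ : Fin M) :
    Fintype.card (∀ i, Fin (m i))
      = m i₀ * Fintype.card (∀ j : {j : Fin M // j ≠ i₀}, Fin (m j.1)) := by
  classical
  rw [Fintype.card_congr (Equiv.piSplitAt i₀ (fun i => Fin (m i))), Fintype.card_prod,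
    Fintype.card_fin]

lemma rot_sum (σ : ℕ → Finset ℕ) (hne : ∀ n, (σ n).Nonempty)
    (hdisj : ∀ m n, m ≠ n → Disjoint (σ m) (σ n))
    (hcov : ∀ k, ∃ n, k ∈ σ n)
    (M : ℕ) (f : ℕ → ℝ) (hM : ∀ k, M ≤ blk σ hcov k → f k = 0) (k : ℕ) :
    ∑ r : (∀ i : Fin M, Fin ((σ i.1).card)),
        rot σ hcov (fun n => if h : n < M then (r ⟨n, h⟩ : ℕ) else 0) f k
      = ((∏ i : Fin M, (σ i.1).card : ℕ) : ℝ) * avgProj σ f k := by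
  classical
  have hcardpos : ∀ n, 0 < (σ n).card := fun n => Finset.card_pos.2 (hne n)
  set n := blk σ hcov k with hn
  have hik : idx σ hcov k < (σ n).card := by rw [hn]; exact idx_lt σ hcov k
  by_cases hnM : n < M
  · set K := Fintype.card (∀ j : {j : Fin M // j ≠ (⟨n, hnM⟩ : Fin M)},
      Fin ((σ (j.1 : ℕ)).card)) with hKdef
    have hsummand : ∀ r : (∀ i : Fin M, Fin ((σ i.1).card)),
        rot σ hcov (fun n' => if h : n' < M then (r ⟨n', h⟩ : ℕ) else 0) f k
          = f (bb σ n ((idx σ hcov k + ((σ n).card - (r ⟨n, hnM⟩ : ℕ))) % (σ n).card)) := by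
      intro r
      rw [rot]
      simp only [← hn, dif_pos hnM]
      rfl
    have hsum1 : ∑ j : Fin ((σ n).card),
        f (bb σ n ((idx σ hcov k + ((σ n).card - (j : ℕ))) % (σ n).card))
        = ∑ x ∈ σ n, f x := by
      have h2 : ∑ j ∈ Finset.range ((σ n).card),
          f (bb σ n ((idx σ hcov k + ((σ n).card - j)) % (σ n).card))
          = ∑ j ∈ Finset.range (σ n).card, f (bb σ n j) := by
        refine Finset.sum_nbij' (fun j => (idx σ hcov k + ((σ n).card - j)) % (σ n).card)
          (fun j => (idx σ hcov k + ((σ n).card - j)) % (σ n).card) ?_ ?_ ?_ ?_ ?_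
        · intro j _; exact Finset.mem_range.2 (Nat.mod_lt _ (hcardpos n))
        · intro j _; exact Finset.mem_range.2 (Nat.mod_lt _ (hcardpos n))
        · intro j hj
          exact inv_lemma (hcardpos n) hik (Finset.mem_range.1 hj)
        · intro j hj
          exact inv_lemma (hcardpos n) hik (Finset.mem_range.1 hj)
        · intro j hj; rfl
      exact (Fin.sum_univ_eq_sum_range
        (fun j => f (bb σ n ((idx σ hcov k + ((σ n).card - j)) % (σ n).card)))
        ((σ n).card)).trans (h2.trans (block_sum σ hcov hdisj n f))
    have hcards : (∏ i : Fin M, (σ i.1).card) = (σ n).card * K := by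
      have h := card_pi_fin (fun i : Fin M => (σ i.1).card) ⟨n, hnM⟩
      rw [Fintype.card_pi] at h
      simp only [Fintype.card_fin] at h
      rw [hKdef]
      exact h
    calc ∑ r : (∀ i : Fin M, Fin ((σ i.1).card)),
        rot σ hcov (fun n' => if h : n' < M then (r ⟨n', h⟩ : ℕ) else 0) f k
        = ∑ r : (∀ i : Fin M, Fin ((σ i.1).card)),
            f (bb σ n ((idx σ hcov k + ((σ n).card - (r ⟨n, hnM⟩ : ℕ))) % (σ n).card)) :=
          Fintype.sum_congr _ _ hsummand
      _ = K • ∑ j : Fin ((σ n).card),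
            f (bb σ n ((idx σ hcov k + ((σ n).card - (j : ℕ))) % (σ n).card)) :=
          sum_pi_fin (fun i : Fin M => (σ i.1).card) ⟨n, hnM⟩
            (fun j => f (bb σ n ((idx σ hcov k + ((σ n).card - (j : ℕ))) % (σ n).card)))
      _ = K • ∑ x ∈ σ n, f x := by rw [hsum1]
      _ = ((∏ i : Fin M, (σ i.1).card : ℕ) : ℝ) * avgProj σ f k := by
          rw [avgProj_eq σ hcov f k, ← hn, hcards]
          have hcne : ((σ n).card : ℝ) ≠ 0 := Nat.cast_ne_zero.2 (hcardpos n).ne'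
          rw [nsmul_eq_mul]
          push_cast
          field_simp
  · have hzero : ∀ x ∈ σ n, f x = 0 := by
      intro x hx
      exact hM x (by rw [blk_unique σ hcov hdisj hx]; omega)
    have hsummand : ∀ r : (∀ i : Fin M, Fin ((σ i.1).card)),
        rot σ hcov (fun n' => if h : n' < M then (r ⟨n', h⟩ : ℕ) else 0) f k = 0 := by
      intro r
      rw [rot]
      simp only [← hn, dif_neg (show ¬ n < M from hnM), Nat.sub_zero, Nat.add_mod_right,
        Nat.mod_eq_of_lt hik]
      exact hzero _ (bb_mem σ hik)
    rw [Fintype.sum_congr _ _ hsummand, Finset.sum_const, avgProj_eq σ hcov f k, ← hn,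
      Finset.sum_eq_zero hzero]
    simp

/-- Let `S` be a subsymmetric sequence Banach space (norm `N` on finitely
supported sequences, `1`-subsymmetric unit vector basis) and `σ` an ordered partition of
`ℕ`. Then the averaging projection satisfies `N(P_σ f) ≤ 2·N(f)` and hence
`N(f - P_σ f) ≤ 3·N(f)` for every finitely supported `f`. -/
theorem stmt_16 (N : (ℕ → ℝ) → ℝ)
    (hN0 : ∀ f, 0 ≤ N f)
    (hNdef : ∀ f : ℕ → ℝ, (Function.support f).Finite → N f = 0 → f = 0)
    (hNsmul : ∀ (t : ℝ) (f : ℕ → ℝ), N (t • f) = |t| * N f)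
    (hNadd : ∀ f g : ℕ → ℝ, N (f + g) ≤ N f + N g)
    (hsub : ∀ f ε : ℕ → ℝ, (Function.support f).Finite → (∀ n, |ε n| = 1) →
      ∀ π : ℕ → ℕ, StrictMono π →
        N (Function.extend π (fun n => ε n * f n) (fun _ => 0)) = N f)
    (σ : ℕ → Finset ℕ) (hσne : ∀ n, (σ n).Nonempty)
    (hσdisj : ∀ m n, m ≠ n → Disjoint (σ m) (σ n))
    (hσord : ∀ n, ∀ i ∈ σ n, ∀ j ∈ σ (n + 1), i < j)
    (hσcov : ∀ k : ℕ, ∃ n, k ∈ σ n) :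
    ∀ f : ℕ → ℝ, (Function.support f).Finite →
      N (avgProj σ f) ≤ 2 * N f ∧ N (f - avgProj σ f) ≤ 3 * N f := by
  intro f hf
  classical
  set Mv := (hf.toFinset.image (blk σ hσcov)).sup id + 1 with hMv
  have hM : ∀ k, Mv ≤ blk σ hσcov k → f k = 0 := by
    intro k hk
    by_contra h
    have hk' : k ∈ hf.toFinset := by
      simpa [Set.Finite.mem_toFinset, Function.mem_support] using h
    have h1 : blk σ hσcov k ∈ hf.toFinset.image (blk σ hσcov) :=
      Finset.mem_image_of_mem _ hk'
    have h2 := Finset.le_sup (f := id) h1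
    simp only [id] at h2
    omega
  have hcardpos : ∀ n, 0 < (σ n).card := fun n => Finset.card_pos.2 (hσne n)
  set C := ∏ i : Fin Mv, (σ i.1).card with hC
  have hCpos : 0 < C := Finset.prod_pos (fun i _ => hcardpos _)
  have hCne : (C : ℝ) ≠ 0 := Nat.cast_ne_zero.2 hCpos.ne'
  have N0 : N 0 = 0 := by
    have h := hNsmul 0 0
    simpa using h
  have hIdent : avgProj σ f = (C : ℝ)⁻¹ •
      ∑ r : (∀ i : Fin Mv, Fin ((σ i.1).card)),
        rot σ hσcov (fun n => if h : n < Mv then (r ⟨n, h⟩ : ℕ) else 0) f := by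
    funext k
    have hrs := rot_sum σ hσne hσdisj hσcov Mv f hM k
    rw [Pi.smul_apply, Finset.sum_apply, hrs, ← hC, smul_eq_mul]
    field_simp
  have hrot : ∀ r : (∀ i : Fin Mv, Fin ((σ i.1).card)),
      N (rot σ hσcov (fun n => if h : n < Mv then (r ⟨n, h⟩ : ℕ) else 0) f) ≤ 2 * N f := by
    intro r
    refine rot_le N hNsmul hNadd hsub σ hσne hσdisj hσord hσcov Mv _ ?_ ?_ f hf hM
    · intro n
      by_cases h : n < Mv
      · simp only [dif_pos h]; exact (r ⟨n, h⟩).2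
      · simp only [dif_neg h]; exact hcardpos n
    · intro n hn
      exact dif_neg (by omega)
  have hcard_univ : (Finset.univ : Finset (∀ i : Fin Mv, Fin ((σ i.1).card))).card = C := by
    rw [Finset.card_univ, Fintype.card_pi]
    simp only [Fintype.card_fin]
    rfl
  have hPbound : N (avgProj σ f) ≤ 2 * N f := by
    rw [hIdent, hNsmul]
    have h1 := seminorm_sum_le N N0 hNadd Finset.univ
      (fun r : (∀ i : Fin Mv, Fin ((σ i.1).card)) =>
        rot σ hσcov (fun n => if h : n < Mv then (r ⟨n, h⟩ : ℕ) else 0) f)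
    have h2 : ∑ r : (∀ i : Fin Mv, Fin ((σ i.1).card)),
        N (rot σ hσcov (fun n => if h : n < Mv then (r ⟨n, h⟩ : ℕ) else 0) f)
        ≤ (C : ℝ) * (2 * N f) := by
      have h3 := Finset.sum_le_card_nsmul Finset.univ
        (fun r : (∀ i : Fin Mv, Fin ((σ i.1).card)) =>
          N (rot σ hσcov (fun n => if h : n < Mv then (r ⟨n, h⟩ : ℕ) else 0) f))
        (2 * N f) (fun r _ => hrot r)
      rw [hcard_univ, nsmul_eq_mul] at h3
      exact h3
    have habs : |(C : ℝ)⁻¹| = (C : ℝ)⁻¹ := abs_of_pos (by positivity)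
    rw [habs]
    have hNsum := le_trans h1 h2
    calc (C : ℝ)⁻¹ * N (∑ r : (∀ i : Fin Mv, Fin ((σ i.1).card)),
          rot σ hσcov (fun n => if h : n < Mv then (r ⟨n, h⟩ : ℕ) else 0) f)
        ≤ (C : ℝ)⁻¹ * ((C : ℝ) * (2 * N f)) := by
          apply mul_le_mul_of_nonneg_left (le_trans h1 h2)
          positivity
      _ = 2 * N f := by field_simp
  refine ⟨hPbound, ?_⟩
  have hsub' : f - avgProj σ f = f + (-1 : ℝ) • avgProj σ f := by
    rw [neg_one_smul, sub_eq_add_neg]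
  rw [hsub']
  have h1 := hNadd f ((-1 : ℝ) • avgProj σ f)
  rw [hNsmul] at h1
  have : |(-1 : ℝ)| = 1 := by norm_num
  rw [this, one_mul] at h1
  linarith
end
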